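/- arXiv:2301.13417 — 2 statements merged into one kernel-verified Lean document; each statement's English description precedes it below -/
import Mathlib

section
/- For every a⁰ ∈ Δ(2), the ten brackets B_{x^c}, c ∈ Δ(3), are linearly independent: if λ = (λ_c)_{c∈Δ(3)} ∈ ℂ^{Δ(3)} satisfies Σ_{c∈Δ(3)} λ_c·B_{x^c}(f,g) = 0 for all f, g ∈ R, then λ_c = 0 for all c ∈ Δ(3). Here B_{x^c} := B_{F^{(c)}} with F^{(c)} ∈ ℂ^{Δ(3)} the coefficient vector of the monomial x^c (F^{(c)}_{c'} = 1 if c' = c and 0 otherwise). -/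
/-- `Δ(n)` for `n ≥ 0`, as a `Finset` of exponent vectors in `ℤ³`:
triples of nonnegative integers summing to `n`. -/
noncomputable def DeltaFin (n : ℕ) : Finset (Fin 3 → ℤ) :=
  (Finset.Icc (fun _ => (0 : ℤ)) (fun _ => (n : ℤ))).filter
    (fun a => a 0 + a 1 + a 2 = (n : ℤ))

/-- The quantity `ρ̃(a,b,c,a',b')`. -/
def rhoT (a b c a' b' : Fin 3 → ℤ) : ℤ :=
  if a' 0 ≤ a 0 - 1 ∧ a 1 - 1 < a' 1 ∧ a' 1 ≤ a 1 + b 1 - 1 ∧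
      a 2 + b 2 < a' 2 + 1 ∧ a' 2 + 1 ≤ c 2 + a 2 + b 2 ∧
      a' 0 + b' 0 = a 0 + b 0 + c 0 - 1 ∧ a' 1 + b' 1 = a 1 + b 1 + c 1 - 1
  then 1 else 0

/-- The coefficient `Σ_σ −sgn(σ)·ρ̃(σ(a,b,c), a', b')`. -/
def sgnSum (a b c a' b' : Fin 3 → ℤ) : ℤ :=
  ∑ σ : Equiv.Perm (Fin 3),
    (-(Equiv.Perm.sign σ : ℤ)) *
      rhoT (![a, b, c] (σ 0)) (![a, b, c] (σ 1)) (![a, b, c] (σ 2)) a' b'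

/-- The element `{a,b}_c` of `S²(V*)`, realized inside the symmetric algebra
(polynomial ring) on the basis `{u_a : a ∈ Δ(2)}`. -/
noncomputable def brkt (a b c : Fin 3 → ℤ) : MvPolynomial (DeltaFin 2) ℂ :=
  ∑ a' : DeltaFin 2, ∑ b' : DeltaFin 2,
    (sgnSum a b c a'.1 b'.1 : ℂ) • (MvPolynomial.X a' * MvPolynomial.X b')

/-- `b_F(u_a,u_b) = Σ_{c ∈ Δ(3)} F_c {a,b}_c`. -/
noncomputable def bF (F : DeltaFin 3 → ℂ) (a b : Fin 3 → ℤ) :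
    MvPolynomial (DeltaFin 2) ℂ :=
  ∑ c : DeltaFin 3, F c • brkt a b c.1

/-- The chart polynomial ring `R = ℂ[y_a : a ∈ Δ(2), a ≠ a⁰]` in 5 variables. -/
noncomputable abbrev ChartRing (a0 : Fin 3 → ℤ) :=
  MvPolynomial ((DeltaFin 2).erase a0) ℂ

/-- The substitution `q ↦ q̄`: `u_{a⁰} ↦ 1` and `u_a ↦ y_a` for `a ≠ a⁰`. -/
noncomputable def chartBar (a0 : Fin 3 → ℤ) (q : MvPolynomial (DeltaFin 2) ℂ) :
    ChartRing a0 :=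
  MvPolynomial.aeval
    (fun a : DeltaFin 2 =>
      if h : a.1 = a0 then 1
      else MvPolynomial.X ⟨a.1, Finset.mem_erase.mpr ⟨h, a.2⟩⟩) q

/-- `P_F(a,b) = b_F(u_a,u_b)‾ − y_b·(b_F(u_a,u_{a⁰}))‾ − y_a·(b_F(u_{a⁰},u_b))‾`. -/
noncomputable def PF (a0 : Fin 3 → ℤ) (F : DeltaFin 3 → ℂ)
    (a b : (DeltaFin 2).erase a0) : ChartRing a0 :=
  chartBar a0 (bF F a.1 b.1) - MvPolynomial.X b * chartBar a0 (bF F a.1 a0) -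
    MvPolynomial.X a * chartBar a0 (bF F a0 b.1)

/-- The bracket `B_F(f,g) = Σ_{a,b ≠ a⁰} P_F(a,b)·(∂f/∂y_a)(∂g/∂y_b)` on the
affine chart `{u_{a⁰} ≠ 0}` of `ℙ⁵`. -/
noncomputable def BF (a0 : Fin 3 → ℤ) (F : DeltaFin 3 → ℂ)
    (f g : ChartRing a0) : ChartRing a0 :=
  ∑ a : (DeltaFin 2).erase a0, ∑ b : (DeltaFin 2).erase a0,
    PF a0 F a b * MvPolynomial.pderiv a f * MvPolynomial.pderiv b g

/-- The coefficient vector `F^{(c)} ∈ ℂ^{Δ(3)}` of the monomial `x^c`: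
`F^{(c)}_{c'} = 1` if `c' = c` and `0` otherwise. -/
noncomputable def Fmono (c : Fin 3 → ℤ) : DeltaFin 3 → ℂ :=
  fun c' => if c'.1 = c then 1 else 0



open MvPolynomial

/-- integer weight function: `1` at `a0`, `p` elsewhere. -/
def wP (a0 : Fin 3 → ℤ) (p : (Fin 3 → ℤ) → ℤ) : (Fin 3 → ℤ) → ℤ :=
  fun x => if x = a0 then 1 else p x

/-- integer version of the evaluated bracket `{a,b}_c`. -/
noncomputable def Tz (w : (Fin 3 → ℤ) → ℤ) (a b c : Fin 3 → ℤ) : ℤ :=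
  ∑ a' : DeltaFin 2, ∑ b' : DeltaFin 2, sgnSum a b c a'.1 b'.1 * w a'.1 * w b'.1

/-- integer version of the evaluated `P_F(a,b)` for `F = Fmono c`. -/
noncomputable def Kz (a0 : Fin 3 → ℤ) (p : (Fin 3 → ℤ) → ℤ) (a b c : Fin 3 → ℤ) : ℤ :=
  Tz (wP a0 p) a b c - p b * Tz (wP a0 p) a a0 c - p a * Tz (wP a0 p) a0 b c

/-- complex version of `Tz`. -/
noncomputable def TzC (w : DeltaFin 2 → ℂ) (a b c : Fin 3 → ℤ) : ℂ :=
  ∑ a' : DeltaFin 2, ∑ b' : DeltaFin 2, (sgnSum a b c a'.1 b'.1 : ℂ) * w a' * w b'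

lemma TzC_cast (w' : (Fin 3 → ℤ) → ℤ) (a b c : Fin 3 → ℤ) :
    TzC (fun x => ((w' x.1 : ℤ) : ℂ)) a b c = ((Tz w' a b c : ℤ) : ℂ) := by
  simp [TzC, Tz]

lemma eval_brkt (w : DeltaFin 2 → ℂ) (a b c : Fin 3 → ℤ) :
    eval w (brkt a b c) = TzC w a b c := by
  simp [brkt, TzC, smul_eq_C_mul, mul_assoc]

lemma eval_bF (w : DeltaFin 2 → ℂ) (F : DeltaFin 3 → ℂ) (a b : Fin 3 → ℤ) :
    eval w (bF F a b) = ∑ c : DeltaFin 3, F c * TzC w a b c.1 := by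
  simp [bF, smul_eq_C_mul, eval_brkt]

lemma eval_bF_mono (w : DeltaFin 2 → ℂ) (c0 : DeltaFin 3) (a b : Fin 3 → ℤ) :
    eval w (bF (Fmono c0.1) a b) = TzC w a b c0.1 := by
  rw [eval_bF]
  rw [Finset.sum_congr rfl (g := fun c => if c = c0 then TzC w a b c0.1 else 0)
    (fun c _ => by
      by_cases h : c = c0
      · simp [h, Fmono]
      · have : ¬ (c.1 = c0.1) := fun hv => h (Subtype.ext hv)
        simp [h, Fmono, this])]
  simp

/-- the evaluation point on the chart, induced by `p`. -/
noncomputable def vC (a0 : Fin 3 → ℤ) (p : (Fin 3 → ℤ) → ℤ) :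
    ((DeltaFin 2).erase a0 : Finset _) → ℂ := fun x => ((p x.1 : ℤ) : ℂ)

lemma eval_chartBar (a0 : Fin 3 → ℤ) (p : (Fin 3 → ℤ) → ℤ)
    (q : MvPolynomial (DeltaFin 2) ℂ) :
    eval (vC a0 p) (chartBar a0 q) = eval (fun x : DeltaFin 2 => ((wP a0 p x.1 : ℤ) : ℂ)) q := by
  rw [chartBar]
  rw [show (eval (vC a0 p)) (aeval _ q) = (aeval (R := ℂ) (vC a0 p)) (aeval _ q) from by
    rw [← coe_aeval_eq_eval]; rfl]
  rw [← AlgHom.comp_apply, comp_aeval]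
  rw [show (aeval (R := ℂ) fun i : DeltaFin 2 => (aeval (vC a0 p))
      (if h : i.1 = a0 then 1 else X ⟨i.1, Finset.mem_erase.mpr ⟨h, i.2⟩⟩))
      = (aeval (R := ℂ) fun x : DeltaFin 2 => ((wP a0 p x.1 : ℤ) : ℂ)) from by
    congr 1
    funext x
    by_cases h : x.1 = a0
    · simp [h, wP]
    · simp [h, wP, vC]]
  rw [← coe_aeval_eq_eval]; rfl

lemma eval_PF (a0 : Fin 3 → ℤ) (ha0 : a0 ∈ DeltaFin 2) (p : (Fin 3 → ℤ) → ℤ)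
    (c0 : DeltaFin 3) (a b : ((DeltaFin 2).erase a0 : Finset _)) :
    eval (vC a0 p) (PF a0 (Fmono c0.1) a b) = ((Kz a0 p a.1 b.1 c0.1 : ℤ) : ℂ) := by
  have hwc : (fun x : DeltaFin 2 => ((wP a0 p x.1 : ℤ) : ℂ))
      = fun x : DeltaFin 2 => ((wP a0 p x.1 : ℤ) : ℂ) := rfl
  have key : ∀ (u v : Fin 3 → ℤ),
      eval (fun x : DeltaFin 2 => ((wP a0 p x.1 : ℤ) : ℂ)) (bF (Fmono c0.1) u v)
        = ((Tz (wP a0 p) u v c0.1 : ℤ) : ℂ) := by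
    intro u v
    rw [eval_bF_mono, ← TzC_cast]
  rw [PF, map_sub, map_sub, map_mul, map_mul, eval_X, eval_X,
    eval_chartBar, eval_chartBar, eval_chartBar, key, key, key, Kz]
  have hb : vC a0 p b = ((p b.1 : ℤ) : ℂ) := rfl
  have ha : vC a0 p a = ((p a.1 : ℤ) : ℂ) := rfl
  rw [hb, ha]
  push_cast
  ring

lemma eval_BF_XX (a0 : Fin 3 → ℤ) (F : DeltaFin 3 → ℂ)
    (a b : ((DeltaFin 2).erase a0 : Finset _)) (v : ((DeltaFin 2).erase a0 : Finset _) → ℂ) :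
    eval v (BF a0 F (X a) (X b)) = eval v (PF a0 F a b) := by
  classical
  rw [BF]
  have inner : ∀ a' : ((DeltaFin 2).erase a0 : Finset _),
      (∑ b' : ((DeltaFin 2).erase a0 : Finset _),
        PF a0 F a' b' * pderiv a' (X a) * pderiv b' (X b))
        = PF a0 F a' b * pderiv a' (X a) := by
    intro a'
    rw [Finset.sum_eq_single b]
    · rw [pderiv_X_self, mul_one]
    · intro b' _ hb
      rw [pderiv_X_of_ne (Ne.symm hb), mul_zero]
    · intro hb; exact absurd (Finset.mem_univ b) hb
  rw [Finset.sum_congr rfl (fun a' _ => inner a')]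
  rw [Finset.sum_eq_single a]
  · rw [pderiv_X_self, mul_one]
  · intro a' _ ha
    rw [pderiv_X_of_ne (Ne.symm ha), mul_zero]
  · intro ha; exact absurd (Finset.mem_univ a) ha

lemma key_lemma (a0 : Fin 3 → ℤ) (ha0 : a0 ∈ DeltaFin 2) (lam : DeltaFin 3 → ℂ)
    (H : ∀ f g : ChartRing a0,
        ∑ c : DeltaFin 3, lam c • BF a0 (Fmono c.1) f g = 0)
    (p : (Fin 3 → ℤ) → ℤ) (a b : ((DeltaFin 2).erase a0 : Finset _)) :
    ∑ c : DeltaFin 3, lam c * ((Kz a0 p a.1 b.1 c.1 : ℤ) : ℂ) = 0 := by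
  have h := congrArg (eval (vC a0 p)) (H (X a) (X b))
  rw [map_sum, map_zero] at h
  rw [← h]
  apply Finset.sum_congr rfl
  intro c _
  rw [smul_eq_C_mul, map_mul, eval_C, eval_BF_XX, eval_PF a0 ha0]

def sgnSum' (a b c a' b' : Fin 3 → ℤ) : ℤ :=
  -(rhoT a b c a' b') + rhoT b a c a' b' + rhoT c b a a' b' + rhoT a c b a' b'
    - rhoT b c a a' b' - rhoT c a b a' b'

lemma sgnSum_eq (a b c a' b' : Fin 3 → ℤ) : sgnSum a b c a' b' = sgnSum' a b c a' b' := by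
  rw [sgnSum, show (Finset.univ : Finset (Equiv.Perm (Fin 3)))
      = {Equiv.refl (Fin 3), Equiv.swap 0 1, Equiv.swap 0 2, Equiv.swap 1 2,
         finRotate 3, (finRotate 3)⁻¹} from by decide]
  rw [Finset.sum_insert (by decide), Finset.sum_insert (by decide),
    Finset.sum_insert (by decide), Finset.sum_insert (by decide),
    Finset.sum_insert (by decide), Finset.sum_singleton]
  have h1 : Equiv.Perm.sign (Equiv.refl (Fin 3)) = 1 := by decide
  have h2 : Equiv.Perm.sign (Equiv.swap (0:Fin 3) 1) = -1 := by decide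
  have h3 : Equiv.Perm.sign (Equiv.swap (0:Fin 3) 2) = -1 := by decide
  have h4 : Equiv.Perm.sign (Equiv.swap (1:Fin 3) 2) = -1 := by decide
  have h5 : Equiv.Perm.sign (finRotate 3) = 1 := by decide
  have h6 : Equiv.Perm.sign (finRotate 3)⁻¹ = 1 := by decide
  rw [h1, h2, h3, h4, h5, h6]
  norm_num [sgnSum']
  ring_nf
  rw [show ((Equiv.swap (0:Fin 3) 1) 2) = 2 from by decide,
      show ((Equiv.swap (0:Fin 3) 2) 1) = 1 from by decide,
      show ((Equiv.swap (1:Fin 3) 2) 0) = 0 from by decide,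
      show ((1:Fin 3) + 1) = 2 from by decide,
      show ((2:Fin 3) + 1) = 0 from by decide,
      show (-1:Fin 3) = 2 from by decide,
      show ((2:Fin 3) - 1) = 1 from by decide]
  simp

noncomputable def Tz' (w : (Fin 3 → ℤ) → ℤ) (a b c : Fin 3 → ℤ) : ℤ :=
  ∑ a' : DeltaFin 2, ∑ b' : DeltaFin 2, sgnSum' a b c a'.1 b'.1 * w a'.1 * w b'.1

noncomputable def Kz' (a0 : Fin 3 → ℤ) (p : (Fin 3 → ℤ) → ℤ) (a b c : Fin 3 → ℤ) : ℤ :=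
  Tz' (wP a0 p) a b c - p b * Tz' (wP a0 p) a a0 c - p a * Tz' (wP a0 p) a0 b c

lemma Kz_eq (a0 : Fin 3 → ℤ) (p : (Fin 3 → ℤ) → ℤ) (a b c : Fin 3 → ℤ) :
    Kz a0 p a b c = Kz' a0 p a b c := by
  simp only [Kz, Kz', Tz, Tz', sgnSum_eq]

def p1 : (Fin 3 → ℤ) → ℤ := fun _ => 1
def p2 : (Fin 3 → ℤ) → ℤ := fun x =>
  if x = ![0,0,2] then 2 else if x = ![0,1,1] then 3 else if x = ![0,2,0] then 5
  else if x = ![1,0,1] then 7 else if x = ![1,1,0] then 11 else 13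

lemma sum_D3_expand (f : (DeltaFin 3 : Finset _) → ℂ) :
    ∑ c : DeltaFin 3, f c =
      f ⟨![0,0,3], by decide⟩ + f ⟨![0,1,2], by decide⟩ + f ⟨![0,2,1], by decide⟩ +
      f ⟨![0,3,0], by decide⟩ + f ⟨![1,0,2], by decide⟩ + f ⟨![1,1,1], by decide⟩ +
      f ⟨![1,2,0], by decide⟩ + f ⟨![2,0,1], by decide⟩ + f ⟨![2,1,0], by decide⟩ +
      f ⟨![3,0,0], by decide⟩ := by
  rw [show (Finset.univ : Finset (DeltaFin 3 : Finset _))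
      = {⟨![0,0,3], by decide⟩, ⟨![0,1,2], by decide⟩, ⟨![0,2,1], by decide⟩,
         ⟨![0,3,0], by decide⟩, ⟨![1,0,2], by decide⟩, ⟨![1,1,1], by decide⟩,
         ⟨![1,2,0], by decide⟩, ⟨![2,0,1], by decide⟩, ⟨![2,1,0], by decide⟩,
         ⟨![3,0,0], by decide⟩} from by decide]
  rw [Finset.sum_insert (by decide), Finset.sum_insert (by decide), Finset.sum_insert (by decide),
    Finset.sum_insert (by decide), Finset.sum_insert (by decide), Finset.sum_insert (by decide),
    Finset.sum_insert (by decide), Finset.sum_insert (by decide), Finset.sum_insert (by decide),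
    Finset.sum_singleton]
  ring

lemma k0_0_0 : Kz' ![0,0,2] p1 ![0,1,1] ![1,0,1] ![0,0,3] = 1 := by decide
lemma k0_0_1 : Kz' ![0,0,2] p1 ![0,1,1] ![1,0,1] ![0,1,2] = 1 := by decide
lemma k0_0_2 : Kz' ![0,0,2] p1 ![0,1,1] ![1,0,1] ![0,2,1] = 1 := by decide
lemma k0_0_3 : Kz' ![0,0,2] p1 ![0,1,1] ![1,0,1] ![0,3,0] = 1 := by decide
lemma k0_0_4 : Kz' ![0,0,2] p1 ![0,1,1] ![1,0,1] ![1,0,2] = 1 := by decide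
lemma k0_0_5 : Kz' ![0,0,2] p1 ![0,1,1] ![1,0,1] ![1,1,1] = 1 := by decide
lemma k0_0_6 : Kz' ![0,0,2] p1 ![0,1,1] ![1,0,1] ![1,2,0] = 1 := by decide
lemma k0_0_7 : Kz' ![0,0,2] p1 ![0,1,1] ![1,0,1] ![2,0,1] = 1 := by decide
lemma k0_0_8 : Kz' ![0,0,2] p1 ![0,1,1] ![1,0,1] ![2,1,0] = 1 := by decide
lemma k0_0_9 : Kz' ![0,0,2] p1 ![0,1,1] ![1,0,1] ![3,0,0] = 1 := by decide
lemma k0_1_0 : Kz' ![0,0,2] p2 ![0,1,1] ![0,2,0] ![0,0,3] = 0 := by decide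
lemma k0_1_1 : Kz' ![0,0,2] p2 ![0,1,1] ![0,2,0] ![0,1,2] = 0 := by decide
lemma k0_1_2 : Kz' ![0,0,2] p2 ![0,1,1] ![0,2,0] ![0,2,1] = 0 := by decide
lemma k0_1_3 : Kz' ![0,0,2] p2 ![0,1,1] ![0,2,0] ![0,3,0] = 0 := by decide
lemma k0_1_4 : Kz' ![0,0,2] p2 ![0,1,1] ![0,2,0] ![1,0,2] = -4 := by decide
lemma k0_1_5 : Kz' ![0,0,2] p2 ![0,1,1] ![0,2,0] ![1,1,1] = -12 := by decide
lemma k0_1_6 : Kz' ![0,0,2] p2 ![0,1,1] ![0,2,0] ![1,2,0] = -20 := by decide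
lemma k0_1_7 : Kz' ![0,0,2] p2 ![0,1,1] ![0,2,0] ![2,0,1] = -56 := by decide
lemma k0_1_8 : Kz' ![0,0,2] p2 ![0,1,1] ![0,2,0] ![2,1,0] = -88 := by decide
lemma k0_1_9 : Kz' ![0,0,2] p2 ![0,1,1] ![0,2,0] ![3,0,0] = -200 := by decide
lemma k0_2_0 : Kz' ![0,0,2] p2 ![0,1,1] ![1,0,1] ![0,0,3] = 1 := by decide
lemma k0_2_1 : Kz' ![0,0,2] p2 ![0,1,1] ![1,0,1] ![0,1,2] = 3 := by decide
lemma k0_2_2 : Kz' ![0,0,2] p2 ![0,1,1] ![1,0,1] ![0,2,1] = 9 := by decide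
lemma k0_2_3 : Kz' ![0,0,2] p2 ![0,1,1] ![1,0,1] ![0,3,0] = 27 := by decide
lemma k0_2_4 : Kz' ![0,0,2] p2 ![0,1,1] ![1,0,1] ![1,0,2] = 7 := by decide
lemma k0_2_5 : Kz' ![0,0,2] p2 ![0,1,1] ![1,0,1] ![1,1,1] = 21 := by decide
lemma k0_2_6 : Kz' ![0,0,2] p2 ![0,1,1] ![1,0,1] ![1,2,0] = 63 := by decide
lemma k0_2_7 : Kz' ![0,0,2] p2 ![0,1,1] ![1,0,1] ![2,0,1] = 49 := by decide
lemma k0_2_8 : Kz' ![0,0,2] p2 ![0,1,1] ![1,0,1] ![2,1,0] = 147 := by decide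
lemma k0_2_9 : Kz' ![0,0,2] p2 ![0,1,1] ![1,0,1] ![3,0,0] = 343 := by decide
lemma k0_3_0 : Kz' ![0,0,2] p2 ![0,1,1] ![1,1,0] ![0,0,3] = 3 := by decide
lemma k0_3_1 : Kz' ![0,0,2] p2 ![0,1,1] ![1,1,0] ![0,1,2] = 9 := by decide
lemma k0_3_2 : Kz' ![0,0,2] p2 ![0,1,1] ![1,1,0] ![0,2,1] = 27 := by decide
lemma k0_3_3 : Kz' ![0,0,2] p2 ![0,1,1] ![1,1,0] ![0,3,0] = 65 := by decide
lemma k0_3_4 : Kz' ![0,0,2] p2 ![0,1,1] ![1,1,0] ![1,0,2] = 11 := by decide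
lemma k0_3_5 : Kz' ![0,0,2] p2 ![0,1,1] ![1,1,0] ![1,1,1] = 33 := by decide
lemma k0_3_6 : Kz' ![0,0,2] p2 ![0,1,1] ![1,1,0] ![1,2,0] = 99 := by decide
lemma k0_3_7 : Kz' ![0,0,2] p2 ![0,1,1] ![1,1,0] ![2,0,1] = 7 := by decide
lemma k0_3_8 : Kz' ![0,0,2] p2 ![0,1,1] ![1,1,0] ![2,1,0] = 121 := by decide
lemma k0_3_9 : Kz' ![0,0,2] p2 ![0,1,1] ![1,1,0] ![3,0,0] = 279 := by decide
lemma k0_4_0 : Kz' ![0,0,2] p2 ![0,1,1] ![2,0,0] ![0,0,3] = 14 := by decide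
lemma k0_4_1 : Kz' ![0,0,2] p2 ![0,1,1] ![2,0,0] ![0,1,2] = 42 := by decide
lemma k0_4_2 : Kz' ![0,0,2] p2 ![0,1,1] ![2,0,0] ![0,2,1] = 126 := by decide
lemma k0_4_3 : Kz' ![0,0,2] p2 ![0,1,1] ![2,0,0] ![0,3,0] = 298 := by decide
lemma k0_4_4 : Kz' ![0,0,2] p2 ![0,1,1] ![2,0,0] ![1,0,2] = 62 := by decide
lemma k0_4_5 : Kz' ![0,0,2] p2 ![0,1,1] ![2,0,0] ![1,1,1] = 186 := by decide
lemma k0_4_6 : Kz' ![0,0,2] p2 ![0,1,1] ![2,0,0] ![1,2,0] = 458 := by decide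
lemma k0_4_7 : Kz' ![0,0,2] p2 ![0,1,1] ![2,0,0] ![2,0,1] = 182 := by decide
lemma k0_4_8 : Kz' ![0,0,2] p2 ![0,1,1] ![2,0,0] ![2,1,0] = 546 := by decide
lemma k0_4_9 : Kz' ![0,0,2] p2 ![0,1,1] ![2,0,0] ![3,0,0] = 806 := by decide
lemma k0_5_0 : Kz' ![0,0,2] p2 ![0,2,0] ![1,0,1] ![0,0,3] = 6 := by decide
lemma k0_5_1 : Kz' ![0,0,2] p2 ![0,2,0] ![1,0,1] ![0,1,2] = 14 := by decide
lemma k0_5_2 : Kz' ![0,0,2] p2 ![0,2,0] ![1,0,1] ![0,2,1] = 30 := by decide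
lemma k0_5_3 : Kz' ![0,0,2] p2 ![0,2,0] ![1,0,1] ![0,3,0] = 70 := by decide
lemma k0_5_4 : Kz' ![0,0,2] p2 ![0,2,0] ![1,0,1] ![1,0,2] = 42 := by decide
lemma k0_5_5 : Kz' ![0,0,2] p2 ![0,2,0] ![1,0,1] ![1,1,1] = 98 := by decide
lemma k0_5_6 : Kz' ![0,0,2] p2 ![0,2,0] ![1,0,1] ![1,2,0] = 210 := by decide
lemma k0_5_7 : Kz' ![0,0,2] p2 ![0,2,0] ![1,0,1] ![2,0,1] = 294 := by decide
lemma k0_5_8 : Kz' ![0,0,2] p2 ![0,2,0] ![1,0,1] ![2,1,0] = 586 := by decide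
lemma k0_5_9 : Kz' ![0,0,2] p2 ![0,2,0] ![1,0,1] ![3,0,0] = 1338 := by decide
lemma k0_6_0 : Kz' ![0,0,2] p2 ![0,2,0] ![1,1,0] ![0,0,3] = 14 := by decide
lemma k0_6_1 : Kz' ![0,0,2] p2 ![0,2,0] ![1,1,0] ![0,1,2] = 30 := by decide
lemma k0_6_2 : Kz' ![0,0,2] p2 ![0,2,0] ![1,1,0] ![0,2,1] = 70 := by decide
lemma k0_6_3 : Kz' ![0,0,2] p2 ![0,2,0] ![1,1,0] ![0,3,0] = 150 := by decide
lemma k0_6_4 : Kz' ![0,0,2] p2 ![0,2,0] ![1,1,0] ![1,0,2] = 66 := by decide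
lemma k0_6_5 : Kz' ![0,0,2] p2 ![0,2,0] ![1,1,0] ![1,1,1] = 154 := by decide
lemma k0_6_6 : Kz' ![0,0,2] p2 ![0,2,0] ![1,1,0] ![1,2,0] = 330 := by decide
lemma k0_6_7 : Kz' ![0,0,2] p2 ![0,2,0] ![1,1,0] ![2,0,1] = 338 := by decide
lemma k0_6_8 : Kz' ![0,0,2] p2 ![0,2,0] ![1,1,0] ![2,1,0] = 726 := by decide
lemma k0_6_9 : Kz' ![0,0,2] p2 ![0,2,0] ![1,1,0] ![3,0,0] = 1642 := by decide
lemma k0_7_0 : Kz' ![0,0,2] p2 ![0,2,0] ![2,0,0] ![0,0,3] = 64 := by decide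
lemma k0_7_1 : Kz' ![0,0,2] p2 ![0,2,0] ![2,0,0] ![0,1,2] = 136 := by decide
lemma k0_7_2 : Kz' ![0,0,2] p2 ![0,2,0] ![2,0,0] ![0,2,1] = 320 := by decide
lemma k0_7_3 : Kz' ![0,0,2] p2 ![0,2,0] ![2,0,0] ![0,3,0] = 680 := by decide
lemma k0_7_4 : Kz' ![0,0,2] p2 ![0,2,0] ![2,0,0] ![1,0,2] = 232 := by decide
lemma k0_7_5 : Kz' ![0,0,2] p2 ![0,2,0] ![2,0,0] ![1,1,1] = 548 := by decide
lemma k0_7_6 : Kz' ![0,0,2] p2 ![0,2,0] ![2,0,0] ![1,2,0] = 1160 := by decide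
lemma k0_7_7 : Kz' ![0,0,2] p2 ![0,2,0] ![2,0,0] ![2,0,1] = 832 := by decide
lemma k0_7_8 : Kz' ![0,0,2] p2 ![0,2,0] ![2,0,0] ![2,1,0] = 1768 := by decide
lemma k0_7_9 : Kz' ![0,0,2] p2 ![0,2,0] ![2,0,0] ![3,0,0] = 3016 := by decide
lemma k0_8_0 : Kz' ![0,0,2] p2 ![1,0,1] ![1,1,0] ![0,0,3] = -7 := by decide
lemma k0_8_1 : Kz' ![0,0,2] p2 ![1,0,1] ![1,1,0] ![0,1,2] = -11 := by decide
lemma k0_8_2 : Kz' ![0,0,2] p2 ![1,0,1] ![1,1,0] ![0,2,1] = -3 := by decide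
lemma k0_8_3 : Kz' ![0,0,2] p2 ![1,0,1] ![1,1,0] ![0,3,0] = 1 := by decide
lemma k0_8_4 : Kz' ![0,0,2] p2 ![1,0,1] ![1,1,0] ![1,0,2] = -49 := by decide
lemma k0_8_5 : Kz' ![0,0,2] p2 ![1,0,1] ![1,1,0] ![1,1,1] = -77 := by decide
lemma k0_8_6 : Kz' ![0,0,2] p2 ![1,0,1] ![1,1,0] ![1,2,0] = -121 := by decide
lemma k0_8_7 : Kz' ![0,0,2] p2 ![1,0,1] ![1,1,0] ![2,0,1] = -343 := by decide
lemma k0_8_8 : Kz' ![0,0,2] p2 ![1,0,1] ![1,1,0] ![2,1,0] = -539 := by decide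
lemma k0_8_9 : Kz' ![0,0,2] p2 ![1,0,1] ![1,1,0] ![3,0,0] = -1105 := by decide
lemma k0_9_0 : Kz' ![0,0,2] p2 ![1,0,1] ![2,0,0] ![0,0,3] = 0 := by decide
lemma k0_9_1 : Kz' ![0,0,2] p2 ![1,0,1] ![2,0,0] ![0,1,2] = 36 := by decide
lemma k0_9_2 : Kz' ![0,0,2] p2 ![1,0,1] ![2,0,0] ![0,2,1] = 216 := by decide
lemma k0_9_3 : Kz' ![0,0,2] p2 ![1,0,1] ![2,0,0] ![0,3,0] = 584 := by decide
lemma k0_9_4 : Kz' ![0,0,2] p2 ![1,0,1] ![2,0,0] ![1,0,2] = 0 := by decide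
lemma k0_9_5 : Kz' ![0,0,2] p2 ![1,0,1] ![2,0,0] ![1,1,1] = 252 := by decide
lemma k0_9_6 : Kz' ![0,0,2] p2 ![1,0,1] ![2,0,0] ![1,2,0] = 792 := by decide
lemma k0_9_7 : Kz' ![0,0,2] p2 ![1,0,1] ![2,0,0] ![2,0,1] = 0 := by decide
lemma k0_9_8 : Kz' ![0,0,2] p2 ![1,0,1] ![2,0,0] ![2,1,0] = 468 := by decide
lemma k0_9_9 : Kz' ![0,0,2] p2 ![1,0,1] ![2,0,0] ![3,0,0] = 0 := by decide
lemma solve0 (lam : (DeltaFin 3 : Finset _) → ℂ)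
    (key : ∀ (p : (Fin 3 → ℤ) → ℤ) (a b : ((DeltaFin 2).erase ![0,0,2] : Finset _)),
      ∑ c : DeltaFin 3, lam c * ((Kz ![0,0,2] p a.1 b.1 c.1 : ℤ) : ℂ) = 0) :
    ∀ c : (DeltaFin 3 : Finset _), lam c = 0 := by
  have h0 := key p1 ⟨![0,1,1], by decide⟩ ⟨![1,0,1], by decide⟩
  rw [sum_D3_expand] at h0
  simp only [Kz_eq, k0_0_0, k0_0_1, k0_0_2, k0_0_3, k0_0_4, k0_0_5, k0_0_6, k0_0_7, k0_0_8, k0_0_9] at h0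
  push_cast at h0
  have h1 := key p2 ⟨![0,1,1], by decide⟩ ⟨![0,2,0], by decide⟩
  rw [sum_D3_expand] at h1
  simp only [Kz_eq, k0_1_0, k0_1_1, k0_1_2, k0_1_3, k0_1_4, k0_1_5, k0_1_6, k0_1_7, k0_1_8, k0_1_9] at h1
  push_cast at h1
  have h2 := key p2 ⟨![0,1,1], by decide⟩ ⟨![1,0,1], by decide⟩
  rw [sum_D3_expand] at h2
  simp only [Kz_eq, k0_2_0, k0_2_1, k0_2_2, k0_2_3, k0_2_4, k0_2_5, k0_2_6, k0_2_7, k0_2_8, k0_2_9] at h2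
  push_cast at h2
  have h3 := key p2 ⟨![0,1,1], by decide⟩ ⟨![1,1,0], by decide⟩
  rw [sum_D3_expand] at h3
  simp only [Kz_eq, k0_3_0, k0_3_1, k0_3_2, k0_3_3, k0_3_4, k0_3_5, k0_3_6, k0_3_7, k0_3_8, k0_3_9] at h3
  push_cast at h3
  have h4 := key p2 ⟨![0,1,1], by decide⟩ ⟨![2,0,0], by decide⟩
  rw [sum_D3_expand] at h4
  simp only [Kz_eq, k0_4_0, k0_4_1, k0_4_2, k0_4_3, k0_4_4, k0_4_5, k0_4_6, k0_4_7, k0_4_8, k0_4_9] at h4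
  push_cast at h4
  have h5 := key p2 ⟨![0,2,0], by decide⟩ ⟨![1,0,1], by decide⟩
  rw [sum_D3_expand] at h5
  simp only [Kz_eq, k0_5_0, k0_5_1, k0_5_2, k0_5_3, k0_5_4, k0_5_5, k0_5_6, k0_5_7, k0_5_8, k0_5_9] at h5
  push_cast at h5
  have h6 := key p2 ⟨![0,2,0], by decide⟩ ⟨![1,1,0], by decide⟩
  rw [sum_D3_expand] at h6
  simp only [Kz_eq, k0_6_0, k0_6_1, k0_6_2, k0_6_3, k0_6_4, k0_6_5, k0_6_6, k0_6_7, k0_6_8, k0_6_9] at h6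
  push_cast at h6
  have h7 := key p2 ⟨![0,2,0], by decide⟩ ⟨![2,0,0], by decide⟩
  rw [sum_D3_expand] at h7
  simp only [Kz_eq, k0_7_0, k0_7_1, k0_7_2, k0_7_3, k0_7_4, k0_7_5, k0_7_6, k0_7_7, k0_7_8, k0_7_9] at h7
  push_cast at h7
  have h8 := key p2 ⟨![1,0,1], by decide⟩ ⟨![1,1,0], by decide⟩
  rw [sum_D3_expand] at h8
  simp only [Kz_eq, k0_8_0, k0_8_1, k0_8_2, k0_8_3, k0_8_4, k0_8_5, k0_8_6, k0_8_7, k0_8_8, k0_8_9] at h8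
  push_cast at h8
  have h9 := key p2 ⟨![1,0,1], by decide⟩ ⟨![2,0,0], by decide⟩
  rw [sum_D3_expand] at h9
  simp only [Kz_eq, k0_9_0, k0_9_1, k0_9_2, k0_9_3, k0_9_4, k0_9_5, k0_9_6, k0_9_7, k0_9_8, k0_9_9] at h9
  push_cast at h9
  intro c
  obtain ⟨cv, hcv⟩ := c
  have hd : cv = ![0,0,3] ∨ cv = ![0,1,2] ∨ cv = ![0,2,1] ∨ cv = ![0,3,0] ∨ cv = ![1,0,2] ∨ cv = ![1,1,1] ∨ cv = ![1,2,0] ∨ cv = ![2,0,1] ∨ cv = ![2,1,0] ∨ cv = ![3,0,0] := by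
    rw [show DeltaFin 3 = {![0,0,3], ![0,1,2], ![0,2,1], ![0,3,0], ![1,0,2], ![1,1,1], ![1,2,0], ![2,0,1], ![2,1,0], ![3,0,0]} from by decide] at hcv
    simpa [Finset.mem_insert] using hcv
  rcases hd with rfl|rfl|rfl|rfl|rfl|rfl|rfl|rfl|rfl|rfl
  · linear_combination ((1 : ℂ)/4) * h0 + ((-9 : ℂ)/484) * h1 + ((739 : ℂ)/484) * h2 + ((-511 : ℂ)/484) * h3 + ((9 : ℂ)/121) * h4 + ((-257 : ℂ)/242) * h5 + ((8 : ℂ)/11) * h6 + ((-1 : ℂ)/22) * h7 + ((-31 : ℂ)/484) * h8 + ((1 : ℂ)/484) * h9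
  · linear_combination ((-5 : ℂ)/2) * h0 + ((45 : ℂ)/242) * h1 + ((-41 : ℂ)/242) * h2 + ((147 : ℂ)/242) * h3 + ((-5 : ℂ)/11) * h4 + ((685 : ℂ)/484) * h5 + ((-27 : ℂ)/22) * h6 + ((13 : ℂ)/44) * h7 + ((52 : ℂ)/121) * h8 + ((-1 : ℂ)/44) * h9
  · linear_combination ((25 : ℂ)/4) * h0 + ((-225 : ℂ)/484) * h1 + ((-1629 : ℂ)/484) * h2 + ((867 : ℂ)/484) * h3 + ((91 : ℂ)/242) * h4 + ((27 : ℂ)/121) * h5 + ((9 : ℂ)/44) * h6 + ((-15 : ℂ)/44) * h7 + ((-283 : ℂ)/484) * h8 + ((35 : ℂ)/484) * h9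
  · linear_combination ((171 : ℂ)/242) * h2 + ((-81 : ℂ)/121) * h3 + ((45 : ℂ)/242) * h4 + ((45 : ℂ)/242) * h8 + ((-25 : ℂ)/484) * h9
  · linear_combination (1 : ℂ) * h0 + ((325 : ℂ)/484) * h1 + ((-38 : ℂ)/121) * h2 + ((-47 : ℂ)/242) * h3 + ((89 : ℂ)/484) * h4 + ((-17 : ℂ)/121) * h5 + ((7 : ℂ)/22) * h6 + ((-5 : ℂ)/44) * h7 + ((-17 : ℂ)/121) * h8 + ((1 : ℂ)/121) * h9
  · linear_combination (-5 : ℂ) * h0 + ((-126 : ℂ)/121) * h1 + ((295 : ℂ)/121) * h2 + ((-96 : ℂ)/121) * h3 + ((-40 : ℂ)/121) * h4 + ((-90 : ℂ)/121) * h5 + ((1 : ℂ)/4) * h7 + ((34 : ℂ)/121) * h8 + ((-6 : ℂ)/121) * h9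
  · linear_combination ((81 : ℂ)/121) * h1 + ((-52 : ℂ)/121) * h2 + ((45 : ℂ)/242) * h3 + ((-61 : ℂ)/484) * h4 + ((45 : ℂ)/242) * h5 + ((-9 : ℂ)/121) * h8 + ((5 : ℂ)/121) * h9
  · linear_combination (1 : ℂ) * h0 + ((7 : ℂ)/22) * h1 + ((-59 : ℂ)/121) * h2 + ((9 : ℂ)/121) * h3 + ((17 : ℂ)/242) * h4 + ((5 : ℂ)/22) * h5 + ((-1 : ℂ)/44) * h6 + ((-1 : ℂ)/22) * h7 + ((-5 : ℂ)/242) * h8 + ((1 : ℂ)/121) * h9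
  · linear_combination ((-45 : ℂ)/121) * h1 + ((12 : ℂ)/121) * h2 + ((9 : ℂ)/121) * h3 + ((5 : ℂ)/242) * h4 + ((-61 : ℂ)/484) * h5 + ((-5 : ℂ)/242) * h8 + ((-1 : ℂ)/121) * h9
  · linear_combination ((25 : ℂ)/484) * h1 + ((-1 : ℂ)/242) * h2 + ((-5 : ℂ)/242) * h3 + ((5 : ℂ)/242) * h5 + ((1 : ℂ)/121) * h8

lemma k1_0_0 : Kz' ![0,1,1] p1 ![0,0,2] ![1,0,1] ![0,0,3] = -1 := by decide
lemma k1_0_1 : Kz' ![0,1,1] p1 ![0,0,2] ![1,0,1] ![0,1,2] = -1 := by decide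
lemma k1_0_2 : Kz' ![0,1,1] p1 ![0,0,2] ![1,0,1] ![0,2,1] = -1 := by decide
lemma k1_0_3 : Kz' ![0,1,1] p1 ![0,0,2] ![1,0,1] ![0,3,0] = -1 := by decide
lemma k1_0_4 : Kz' ![0,1,1] p1 ![0,0,2] ![1,0,1] ![1,0,2] = -1 := by decide
lemma k1_0_5 : Kz' ![0,1,1] p1 ![0,0,2] ![1,0,1] ![1,1,1] = -1 := by decide
lemma k1_0_6 : Kz' ![0,1,1] p1 ![0,0,2] ![1,0,1] ![1,2,0] = -1 := by decide
lemma k1_0_7 : Kz' ![0,1,1] p1 ![0,0,2] ![1,0,1] ![2,0,1] = -1 := by decide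
lemma k1_0_8 : Kz' ![0,1,1] p1 ![0,0,2] ![1,0,1] ![2,1,0] = -1 := by decide
lemma k1_0_9 : Kz' ![0,1,1] p1 ![0,0,2] ![1,0,1] ![3,0,0] = -1 := by decide
lemma k1_1_0 : Kz' ![0,1,1] p2 ![0,0,2] ![0,2,0] ![0,0,3] = 0 := by decide
lemma k1_1_1 : Kz' ![0,1,1] p2 ![0,0,2] ![0,2,0] ![0,1,2] = 0 := by decide
lemma k1_1_2 : Kz' ![0,1,1] p2 ![0,0,2] ![0,2,0] ![0,2,1] = 0 := by decide
lemma k1_1_3 : Kz' ![0,1,1] p2 ![0,0,2] ![0,2,0] ![0,3,0] = 0 := by decide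
lemma k1_1_4 : Kz' ![0,1,1] p2 ![0,0,2] ![0,2,0] ![1,0,2] = -18 := by decide
lemma k1_1_5 : Kz' ![0,1,1] p2 ![0,0,2] ![0,2,0] ![1,1,1] = -9 := by decide
lemma k1_1_6 : Kz' ![0,1,1] p2 ![0,0,2] ![0,2,0] ![1,2,0] = -45 := by decide
lemma k1_1_7 : Kz' ![0,1,1] p2 ![0,0,2] ![0,2,0] ![2,0,1] = -126 := by decide
lemma k1_1_8 : Kz' ![0,1,1] p2 ![0,0,2] ![0,2,0] ![2,1,0] = -198 := by decide
lemma k1_1_9 : Kz' ![0,1,1] p2 ![0,0,2] ![0,2,0] ![3,0,0] = -567 := by decide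
lemma k1_2_0 : Kz' ![0,1,1] p2 ![0,0,2] ![1,0,1] ![0,0,3] = -8 := by decide
lemma k1_2_1 : Kz' ![0,1,1] p2 ![0,0,2] ![1,0,1] ![0,1,2] = -4 := by decide
lemma k1_2_2 : Kz' ![0,1,1] p2 ![0,0,2] ![1,0,1] ![0,2,1] = -2 := by decide
lemma k1_2_3 : Kz' ![0,1,1] p2 ![0,0,2] ![1,0,1] ![0,3,0] = -1 := by decide
lemma k1_2_4 : Kz' ![0,1,1] p2 ![0,0,2] ![1,0,1] ![1,0,2] = -28 := by decide
lemma k1_2_5 : Kz' ![0,1,1] p2 ![0,0,2] ![1,0,1] ![1,1,1] = -14 := by decide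
lemma k1_2_6 : Kz' ![0,1,1] p2 ![0,0,2] ![1,0,1] ![1,2,0] = -7 := by decide
lemma k1_2_7 : Kz' ![0,1,1] p2 ![0,0,2] ![1,0,1] ![2,0,1] = -98 := by decide
lemma k1_2_8 : Kz' ![0,1,1] p2 ![0,0,2] ![1,0,1] ![2,1,0] = -49 := by decide
lemma k1_2_9 : Kz' ![0,1,1] p2 ![0,0,2] ![1,0,1] ![3,0,0] = -343 := by decide
lemma k1_3_0 : Kz' ![0,1,1] p2 ![0,0,2] ![1,1,0] ![0,0,3] = -4 := by decide
lemma k1_3_1 : Kz' ![0,1,1] p2 ![0,0,2] ![1,1,0] ![0,1,2] = -2 := by decide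
lemma k1_3_2 : Kz' ![0,1,1] p2 ![0,0,2] ![1,1,0] ![0,2,1] = -1 := by decide
lemma k1_3_3 : Kz' ![0,1,1] p2 ![0,0,2] ![1,1,0] ![0,3,0] = 40 := by decide
lemma k1_3_4 : Kz' ![0,1,1] p2 ![0,0,2] ![1,1,0] ![1,0,2] = -44 := by decide
lemma k1_3_5 : Kz' ![0,1,1] p2 ![0,0,2] ![1,1,0] ![1,1,1] = -22 := by decide
lemma k1_3_6 : Kz' ![0,1,1] p2 ![0,0,2] ![1,1,0] ![1,2,0] = -11 := by decide
lemma k1_3_7 : Kz' ![0,1,1] p2 ![0,0,2] ![1,1,0] ![2,0,1] = -259 := by decide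
lemma k1_3_8 : Kz' ![0,1,1] p2 ![0,0,2] ![1,1,0] ![2,1,0] = -242 := by decide
lemma k1_3_9 : Kz' ![0,1,1] p2 ![0,0,2] ![1,1,0] ![3,0,0] = -929 := by decide
lemma k1_4_0 : Kz' ![0,1,1] p2 ![0,0,2] ![2,0,0] ![0,0,3] = -56 := by decide
lemma k1_4_1 : Kz' ![0,1,1] p2 ![0,0,2] ![2,0,0] ![0,1,2] = -28 := by decide
lemma k1_4_2 : Kz' ![0,1,1] p2 ![0,0,2] ![2,0,0] ![0,2,1] = -14 := by decide
lemma k1_4_3 : Kz' ![0,1,1] p2 ![0,0,2] ![2,0,0] ![0,3,0] = 128 := by decide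
lemma k1_4_4 : Kz' ![0,1,1] p2 ![0,0,2] ![2,0,0] ![1,0,2] = -150 := by decide
lemma k1_4_5 : Kz' ![0,1,1] p2 ![0,0,2] ![2,0,0] ![1,1,1] = -75 := by decide
lemma k1_4_6 : Kz' ![0,1,1] p2 ![0,0,2] ![2,0,0] ![1,2,0] = 75 := by decide
lemma k1_4_7 : Kz' ![0,1,1] p2 ![0,0,2] ![2,0,0] ![2,0,1] = -364 := by decide
lemma k1_4_8 : Kz' ![0,1,1] p2 ![0,0,2] ![2,0,0] ![2,1,0] = -182 := by decide
lemma k1_4_9 : Kz' ![0,1,1] p2 ![0,0,2] ![2,0,0] ![3,0,0] = -975 := by decide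
lemma k1_5_0 : Kz' ![0,1,1] p2 ![0,2,0] ![1,0,1] ![0,0,3] = -16 := by decide
lemma k1_5_1 : Kz' ![0,1,1] p2 ![0,2,0] ![1,0,1] ![0,1,2] = 1 := by decide
lemma k1_5_2 : Kz' ![0,1,1] p2 ![0,2,0] ![1,0,1] ![0,2,1] = 5 := by decide
lemma k1_5_3 : Kz' ![0,1,1] p2 ![0,2,0] ![1,0,1] ![0,3,0] = 25 := by decide
lemma k1_5_4 : Kz' ![0,1,1] p2 ![0,2,0] ![1,0,1] ![1,0,2] = 7 := by decide
lemma k1_5_5 : Kz' ![0,1,1] p2 ![0,2,0] ![1,0,1] ![1,1,1] = 35 := by decide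
lemma k1_5_6 : Kz' ![0,1,1] p2 ![0,2,0] ![1,0,1] ![1,2,0] = 175 := by decide
lemma k1_5_7 : Kz' ![0,1,1] p2 ![0,2,0] ![1,0,1] ![2,0,1] = 245 := by decide
lemma k1_5_8 : Kz' ![0,1,1] p2 ![0,2,0] ![1,0,1] ![2,1,0] = 649 := by decide
lemma k1_5_9 : Kz' ![0,1,1] p2 ![0,2,0] ![1,0,1] ![3,0,0] = 1471 := by decide
lemma k1_6_0 : Kz' ![0,1,1] p2 ![0,2,0] ![1,1,0] ![0,0,3] = 1 := by decide
lemma k1_6_1 : Kz' ![0,1,1] p2 ![0,2,0] ![1,1,0] ![0,1,2] = 5 := by decide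
lemma k1_6_2 : Kz' ![0,1,1] p2 ![0,2,0] ![1,1,0] ![0,2,1] = 25 := by decide
lemma k1_6_3 : Kz' ![0,1,1] p2 ![0,2,0] ![1,1,0] ![0,3,0] = 125 := by decide
lemma k1_6_4 : Kz' ![0,1,1] p2 ![0,2,0] ![1,1,0] ![1,0,2] = 11 := by decide
lemma k1_6_5 : Kz' ![0,1,1] p2 ![0,2,0] ![1,1,0] ![1,1,1] = 55 := by decide
lemma k1_6_6 : Kz' ![0,1,1] p2 ![0,2,0] ![1,1,0] ![1,2,0] = 275 := by decide
lemma k1_6_7 : Kz' ![0,1,1] p2 ![0,2,0] ![1,1,0] ![2,0,1] = 121 := by decide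
lemma k1_6_8 : Kz' ![0,1,1] p2 ![0,2,0] ![1,1,0] ![2,1,0] = 605 := by decide
lemma k1_6_9 : Kz' ![0,1,1] p2 ![0,2,0] ![1,1,0] ![3,0,0] = 1331 := by decide
lemma k1_7_0 : Kz' ![0,1,1] p2 ![0,2,0] ![2,0,0] ![0,0,3] = -82 := by decide
lemma k1_7_1 : Kz' ![0,1,1] p2 ![0,2,0] ![2,0,0] ![0,1,2] = 22 := by decide
lemma k1_7_2 : Kz' ![0,1,1] p2 ![0,2,0] ![2,0,0] ![0,2,1] = 110 := by decide
lemma k1_7_3 : Kz' ![0,1,1] p2 ![0,2,0] ![2,0,0] ![0,3,0] = 550 := by decide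
lemma k1_7_4 : Kz' ![0,1,1] p2 ![0,2,0] ![2,0,0] ![1,0,2] = -78 := by decide
lemma k1_7_5 : Kz' ![0,1,1] p2 ![0,2,0] ![2,0,0] ![1,1,1] = 186 := by decide
lemma k1_7_6 : Kz' ![0,1,1] p2 ![0,2,0] ![2,0,0] ![1,2,0] = 930 := by decide
lemma k1_7_7 : Kz' ![0,1,1] p2 ![0,2,0] ![2,0,0] ![2,0,1] = 286 := by decide
lemma k1_7_8 : Kz' ![0,1,1] p2 ![0,2,0] ![2,0,0] ![2,1,0] = 1430 := by decide
lemma k1_7_9 : Kz' ![0,1,1] p2 ![0,2,0] ![2,0,0] ![3,0,0] = 2418 := by decide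
lemma k1_8_0 : Kz' ![0,1,1] p2 ![1,0,1] ![1,1,0] ![0,0,3] = 16 := by decide
lemma k1_8_1 : Kz' ![0,1,1] p2 ![1,0,1] ![1,1,0] ![0,1,2] = -7 := by decide
lemma k1_8_2 : Kz' ![0,1,1] p2 ![1,0,1] ![1,1,0] ![0,2,1] = -11 := by decide
lemma k1_8_3 : Kz' ![0,1,1] p2 ![1,0,1] ![1,1,0] ![0,3,0] = 65 := by decide
lemma k1_8_4 : Kz' ![0,1,1] p2 ![1,0,1] ![1,1,0] ![1,0,2] = -49 := by decide
lemma k1_8_5 : Kz' ![0,1,1] p2 ![1,0,1] ![1,1,0] ![1,1,1] = -77 := by decide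
lemma k1_8_6 : Kz' ![0,1,1] p2 ![1,0,1] ![1,1,0] ![1,2,0] = -121 := by decide
lemma k1_8_7 : Kz' ![0,1,1] p2 ![1,0,1] ![1,1,0] ![2,0,1] = -539 := by decide
lemma k1_8_8 : Kz' ![0,1,1] p2 ![1,0,1] ![1,1,0] ![2,1,0] = -847 := by decide
lemma k1_8_9 : Kz' ![0,1,1] p2 ![1,0,1] ![1,1,0] ![3,0,0] = -1833 := by decide
lemma k1_9_0 : Kz' ![0,1,1] p2 ![1,0,1] ![2,0,0] ![0,0,3] = -144 := by decide
lemma k1_9_1 : Kz' ![0,1,1] p2 ![1,0,1] ![2,0,0] ![0,1,2] = -49 := by decide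
lemma k1_9_2 : Kz' ![0,1,1] p2 ![1,0,1] ![2,0,0] ![0,2,1] = -13 := by decide
lemma k1_9_3 : Kz' ![0,1,1] p2 ![1,0,1] ![2,0,0] ![0,3,0] = 519 := by decide
lemma k1_9_4 : Kz' ![0,1,1] p2 ![1,0,1] ![2,0,0] ![1,0,2] = -343 := by decide
lemma k1_9_5 : Kz' ![0,1,1] p2 ![1,0,1] ![2,0,0] ![1,1,1] = -91 := by decide
lemma k1_9_6 : Kz' ![0,1,1] p2 ![1,0,1] ![2,0,0] ![1,2,0] = 561 := by decide
lemma k1_9_7 : Kz' ![0,1,1] p2 ![1,0,1] ![2,0,0] ![2,0,1] = -637 := by decide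
lemma k1_9_8 : Kz' ![0,1,1] p2 ![1,0,1] ![2,0,0] ![2,1,0] = -169 := by decide
lemma k1_9_9 : Kz' ![0,1,1] p2 ![1,0,1] ![2,0,0] ![3,0,0] = -1183 := by decide
lemma solve1 (lam : (DeltaFin 3 : Finset _) → ℂ)
    (key : ∀ (p : (Fin 3 → ℤ) → ℤ) (a b : ((DeltaFin 2).erase ![0,1,1] : Finset _)),
      ∑ c : DeltaFin 3, lam c * ((Kz ![0,1,1] p a.1 b.1 c.1 : ℤ) : ℂ) = 0) :
    ∀ c : (DeltaFin 3 : Finset _), lam c = 0 := by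
  have h0 := key p1 ⟨![0,0,2], by decide⟩ ⟨![1,0,1], by decide⟩
  rw [sum_D3_expand] at h0
  simp only [Kz_eq, k1_0_0, k1_0_1, k1_0_2, k1_0_3, k1_0_4, k1_0_5, k1_0_6, k1_0_7, k1_0_8, k1_0_9] at h0
  push_cast at h0
  have h1 := key p2 ⟨![0,0,2], by decide⟩ ⟨![0,2,0], by decide⟩
  rw [sum_D3_expand] at h1
  simp only [Kz_eq, k1_1_0, k1_1_1, k1_1_2, k1_1_3, k1_1_4, k1_1_5, k1_1_6, k1_1_7, k1_1_8, k1_1_9] at h1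
  push_cast at h1
  have h2 := key p2 ⟨![0,0,2], by decide⟩ ⟨![1,0,1], by decide⟩
  rw [sum_D3_expand] at h2
  simp only [Kz_eq, k1_2_0, k1_2_1, k1_2_2, k1_2_3, k1_2_4, k1_2_5, k1_2_6, k1_2_7, k1_2_8, k1_2_9] at h2
  push_cast at h2
  have h3 := key p2 ⟨![0,0,2], by decide⟩ ⟨![1,1,0], by decide⟩
  rw [sum_D3_expand] at h3
  simp only [Kz_eq, k1_3_0, k1_3_1, k1_3_2, k1_3_3, k1_3_4, k1_3_5, k1_3_6, k1_3_7, k1_3_8, k1_3_9] at h3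
  push_cast at h3
  have h4 := key p2 ⟨![0,0,2], by decide⟩ ⟨![2,0,0], by decide⟩
  rw [sum_D3_expand] at h4
  simp only [Kz_eq, k1_4_0, k1_4_1, k1_4_2, k1_4_3, k1_4_4, k1_4_5, k1_4_6, k1_4_7, k1_4_8, k1_4_9] at h4
  push_cast at h4
  have h5 := key p2 ⟨![0,2,0], by decide⟩ ⟨![1,0,1], by decide⟩
  rw [sum_D3_expand] at h5
  simp only [Kz_eq, k1_5_0, k1_5_1, k1_5_2, k1_5_3, k1_5_4, k1_5_5, k1_5_6, k1_5_7, k1_5_8, k1_5_9] at h5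
  push_cast at h5
  have h6 := key p2 ⟨![0,2,0], by decide⟩ ⟨![1,1,0], by decide⟩
  rw [sum_D3_expand] at h6
  simp only [Kz_eq, k1_6_0, k1_6_1, k1_6_2, k1_6_3, k1_6_4, k1_6_5, k1_6_6, k1_6_7, k1_6_8, k1_6_9] at h6
  push_cast at h6
  have h7 := key p2 ⟨![0,2,0], by decide⟩ ⟨![2,0,0], by decide⟩
  rw [sum_D3_expand] at h7
  simp only [Kz_eq, k1_7_0, k1_7_1, k1_7_2, k1_7_3, k1_7_4, k1_7_5, k1_7_6, k1_7_7, k1_7_8, k1_7_9] at h7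
  push_cast at h7
  have h8 := key p2 ⟨![1,0,1], by decide⟩ ⟨![1,1,0], by decide⟩
  rw [sum_D3_expand] at h8
  simp only [Kz_eq, k1_8_0, k1_8_1, k1_8_2, k1_8_3, k1_8_4, k1_8_5, k1_8_6, k1_8_7, k1_8_8, k1_8_9] at h8
  push_cast at h8
  have h9 := key p2 ⟨![1,0,1], by decide⟩ ⟨![2,0,0], by decide⟩
  rw [sum_D3_expand] at h9
  simp only [Kz_eq, k1_9_0, k1_9_1, k1_9_2, k1_9_3, k1_9_4, k1_9_5, k1_9_6, k1_9_7, k1_9_8, k1_9_9] at h9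
  push_cast at h9
  intro c
  obtain ⟨cv, hcv⟩ := c
  have hd : cv = ![0,0,3] ∨ cv = ![0,1,2] ∨ cv = ![0,2,1] ∨ cv = ![0,3,0] ∨ cv = ![1,0,2] ∨ cv = ![1,1,1] ∨ cv = ![1,2,0] ∨ cv = ![2,0,1] ∨ cv = ![2,1,0] ∨ cv = ![3,0,0] := by
    rw [show DeltaFin 3 = {![0,0,3], ![0,1,2], ![0,2,1], ![0,3,0], ![1,0,2], ![1,1,1], ![1,2,0], ![2,0,1], ![2,1,0], ![3,0,0]} from by decide] at hcv
    simpa [Finset.mem_insert] using hcv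
  rcases hd with rfl|rfl|rfl|rfl|rfl|rfl|rfl|rfl|rfl|rfl
  · linear_combination ((-16 : ℂ)/25) * h0 + ((104 : ℂ)/18225) * h1 + ((64 : ℂ)/18225) * h2 + ((-224 : ℂ)/18225) * h3 + ((8 : ℂ)/1215) * h4 + ((-497 : ℂ)/6075) * h5 + ((53 : ℂ)/675) * h6 + ((-1 : ℂ)/45) * h7 + ((-11 : ℂ)/243) * h8 + ((1 : ℂ)/81) * h9
  · linear_combination ((-4 : ℂ)/5) * h0 + ((26 : ℂ)/3645) * h1 + ((-229 : ℂ)/3645) * h2 + ((224 : ℂ)/3645) * h3 + ((-5 : ℂ)/243) * h4 + ((1061 : ℂ)/9720) * h5 + ((-121 : ℂ)/1620) * h6 + ((1 : ℂ)/216) * h7 + ((53 : ℂ)/1944) * h8 + ((1 : ℂ)/324) * h9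
  · linear_combination ((-1 : ℂ)/4) * h0 + ((13 : ℂ)/5832) * h1 + ((113 : ℂ)/729) * h2 + ((-701 : ℂ)/5832) * h3 + ((17 : ℂ)/972) * h4 + ((-521 : ℂ)/15552) * h5 + ((5 : ℂ)/648) * h6 + ((5 : ℂ)/432) * h7 + ((89 : ℂ)/3888) * h8 + ((-55 : ℂ)/5184) * h9
  · linear_combination ((-64 : ℂ)/729) * h2 + ((23 : ℂ)/729) * h3 + ((5 : ℂ)/243) * h4 + ((-115 : ℂ)/15552) * h8 + ((-25 : ℂ)/5184) * h9
  · linear_combination ((12 : ℂ)/25) * h0 + ((-1478 : ℂ)/18225) * h1 + ((-16 : ℂ)/6075) * h2 + ((77 : ℂ)/2025) * h3 + ((-2 : ℂ)/405) * h4 + ((1057 : ℂ)/48600) * h5 + ((-277 : ℂ)/8100) * h6 + ((13 : ℂ)/1080) * h7 + ((5 : ℂ)/216) * h8 + ((-1 : ℂ)/108) * h9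
  · linear_combination ((3 : ℂ)/10) * h0 + ((3287 : ℂ)/29160) * h1 + ((-8 : ℂ)/135) * h2 + ((7 : ℂ)/1215) * h3 + ((-1 : ℂ)/216) * h4 + ((91 : ℂ)/38880) * h5 + ((31 : ℂ)/1620) * h6 + ((-1 : ℂ)/216) * h7 + ((-11 : ℂ)/648) * h8 + ((1 : ℂ)/288) * h9
  · linear_combination ((-23 : ℂ)/729) * h1 + ((16 : ℂ)/243) * h2 + ((-23 : ℂ)/1944) * h3 + ((-13 : ℂ)/648) * h4 + ((-115 : ℂ)/15552) * h5 + ((23 : ℂ)/5184) * h8 + ((5 : ℂ)/864) * h9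
  · linear_combination ((-9 : ℂ)/100) * h0 + ((-343 : ℂ)/24300) * h1 + ((1 : ℂ)/2025) * h2 + ((-1 : ℂ)/5400) * h3 + ((1 : ℂ)/1080) * h4 + ((-1691 : ℂ)/129600) * h5 + ((19 : ℂ)/5400) * h6 + ((-1 : ℂ)/720) * h7 + ((-1 : ℂ)/144) * h8 + ((1 : ℂ)/576) * h9
  · linear_combination ((-17 : ℂ)/1944) * h1 + ((-1 : ℂ)/81) * h2 + ((1 : ℂ)/81) * h3 + ((1 : ℂ)/216) * h4 + ((-1 : ℂ)/2592) * h5 + ((-5 : ℂ)/1728) * h8 + ((-1 : ℂ)/576) * h9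
  · linear_combination ((5 : ℂ)/648) * h1 + ((-1 : ℂ)/216) * h3 + ((5 : ℂ)/1728) * h5 + ((1 : ℂ)/576) * h8

lemma k2_0_0 : Kz' ![0,2,0] p1 ![0,0,2] ![1,0,1] ![0,0,3] = -2 := by decide
lemma k2_0_1 : Kz' ![0,2,0] p1 ![0,0,2] ![1,0,1] ![0,1,2] = -2 := by decide
lemma k2_0_2 : Kz' ![0,2,0] p1 ![0,0,2] ![1,0,1] ![0,2,1] = -2 := by decide
lemma k2_0_3 : Kz' ![0,2,0] p1 ![0,0,2] ![1,0,1] ![0,3,0] = -2 := by decide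
lemma k2_0_4 : Kz' ![0,2,0] p1 ![0,0,2] ![1,0,1] ![1,0,2] = -2 := by decide
lemma k2_0_5 : Kz' ![0,2,0] p1 ![0,0,2] ![1,0,1] ![1,1,1] = -2 := by decide
lemma k2_0_6 : Kz' ![0,2,0] p1 ![0,0,2] ![1,0,1] ![1,2,0] = -2 := by decide
lemma k2_0_7 : Kz' ![0,2,0] p1 ![0,0,2] ![1,0,1] ![2,0,1] = -2 := by decide
lemma k2_0_8 : Kz' ![0,2,0] p1 ![0,0,2] ![1,0,1] ![2,1,0] = -2 := by decide
lemma k2_0_9 : Kz' ![0,2,0] p1 ![0,0,2] ![1,0,1] ![3,0,0] = -2 := by decide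
lemma k2_1_0 : Kz' ![0,2,0] p2 ![0,0,2] ![0,1,1] ![0,0,3] = 0 := by decide
lemma k2_1_1 : Kz' ![0,2,0] p2 ![0,0,2] ![0,1,1] ![0,1,2] = 0 := by decide
lemma k2_1_2 : Kz' ![0,2,0] p2 ![0,0,2] ![0,1,1] ![0,2,1] = 0 := by decide
lemma k2_1_3 : Kz' ![0,2,0] p2 ![0,0,2] ![0,1,1] ![0,3,0] = 0 := by decide
lemma k2_1_4 : Kz' ![0,2,0] p2 ![0,0,2] ![0,1,1] ![1,0,2] = -14 := by decide
lemma k2_1_5 : Kz' ![0,2,0] p2 ![0,0,2] ![0,1,1] ![1,1,1] = -21 := by decide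
lemma k2_1_6 : Kz' ![0,2,0] p2 ![0,0,2] ![0,1,1] ![1,2,0] = -7 := by decide
lemma k2_1_7 : Kz' ![0,2,0] p2 ![0,0,2] ![0,1,1] ![2,0,1] = -98 := by decide
lemma k2_1_8 : Kz' ![0,2,0] p2 ![0,0,2] ![0,1,1] ![2,1,0] = -154 := by decide
lemma k2_1_9 : Kz' ![0,2,0] p2 ![0,0,2] ![0,1,1] ![3,0,0] = -353 := by decide
lemma k2_2_0 : Kz' ![0,2,0] p2 ![0,0,2] ![1,0,1] ![0,0,3] = -24 := by decide
lemma k2_2_1 : Kz' ![0,2,0] p2 ![0,0,2] ![1,0,1] ![0,1,2] = -22 := by decide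
lemma k2_2_2 : Kz' ![0,2,0] p2 ![0,0,2] ![1,0,1] ![0,2,1] = -12 := by decide
lemma k2_2_3 : Kz' ![0,2,0] p2 ![0,0,2] ![1,0,1] ![0,3,0] = -11 := by decide
lemma k2_2_4 : Kz' ![0,2,0] p2 ![0,0,2] ![1,0,1] ![1,0,2] = -84 := by decide
lemma k2_2_5 : Kz' ![0,2,0] p2 ![0,0,2] ![1,0,1] ![1,1,1] = -77 := by decide
lemma k2_2_6 : Kz' ![0,2,0] p2 ![0,0,2] ![1,0,1] ![1,2,0] = -42 := by decide
lemma k2_2_7 : Kz' ![0,2,0] p2 ![0,0,2] ![1,0,1] ![2,0,1] = -294 := by decide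
lemma k2_2_8 : Kz' ![0,2,0] p2 ![0,0,2] ![1,0,1] ![2,1,0] = -269 := by decide
lemma k2_2_9 : Kz' ![0,2,0] p2 ![0,0,2] ![1,0,1] ![3,0,0] = -1052 := by decide
lemma k2_3_0 : Kz' ![0,2,0] p2 ![0,0,2] ![1,1,0] ![0,0,3] = -22 := by decide
lemma k2_3_1 : Kz' ![0,2,0] p2 ![0,0,2] ![1,1,0] ![0,1,2] = -12 := by decide
lemma k2_3_2 : Kz' ![0,2,0] p2 ![0,0,2] ![1,1,0] ![0,2,1] = -11 := by decide
lemma k2_3_3 : Kz' ![0,2,0] p2 ![0,0,2] ![1,1,0] ![0,3,0] = -6 := by decide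
lemma k2_3_4 : Kz' ![0,2,0] p2 ![0,0,2] ![1,1,0] ![1,0,2] = -132 := by decide
lemma k2_3_5 : Kz' ![0,2,0] p2 ![0,0,2] ![1,1,0] ![1,1,1] = -121 := by decide
lemma k2_3_6 : Kz' ![0,2,0] p2 ![0,0,2] ![1,1,0] ![1,2,0] = -66 := by decide
lemma k2_3_7 : Kz' ![0,2,0] p2 ![0,0,2] ![1,1,0] ![2,0,1] = -655 := by decide
lemma k2_3_8 : Kz' ![0,2,0] p2 ![0,0,2] ![1,1,0] ![2,1,0] = -726 := by decide
lemma k2_3_9 : Kz' ![0,2,0] p2 ![0,0,2] ![1,1,0] ![3,0,0] = -2370 := by decide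
lemma k2_4_0 : Kz' ![0,2,0] p2 ![0,0,2] ![2,0,0] ![0,0,3] = -172 := by decide
lemma k2_4_1 : Kz' ![0,2,0] p2 ![0,0,2] ![2,0,0] ![0,1,2] = -160 := by decide
lemma k2_4_2 : Kz' ![0,2,0] p2 ![0,0,2] ![2,0,0] ![0,2,1] = -86 := by decide
lemma k2_4_3 : Kz' ![0,2,0] p2 ![0,0,2] ![2,0,0] ![0,3,0] = -80 := by decide
lemma k2_4_4 : Kz' ![0,2,0] p2 ![0,0,2] ![2,0,0] ![1,0,2] = -464 := by decide
lemma k2_4_5 : Kz' ![0,2,0] p2 ![0,0,2] ![2,0,0] ![1,1,1] = -434 := by decide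
lemma k2_4_6 : Kz' ![0,2,0] p2 ![0,0,2] ![2,0,0] ![1,2,0] = -232 := by decide
lemma k2_4_7 : Kz' ![0,2,0] p2 ![0,0,2] ![2,0,0] ![2,0,1] = -1118 := by decide
lemma k2_4_8 : Kz' ![0,2,0] p2 ![0,0,2] ![2,0,0] ![2,1,0] = -1040 := by decide
lemma k2_4_9 : Kz' ![0,2,0] p2 ![0,0,2] ![2,0,0] ![3,0,0] = -3016 := by decide
lemma k2_5_0 : Kz' ![0,2,0] p2 ![0,1,1] ![1,0,1] ![0,0,3] = -32 := by decide
lemma k2_5_1 : Kz' ![0,2,0] p2 ![0,1,1] ![1,0,1] ![0,1,2] = -27 := by decide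
lemma k2_5_2 : Kz' ![0,2,0] p2 ![0,1,1] ![1,0,1] ![0,2,1] = -9 := by decide
lemma k2_5_3 : Kz' ![0,2,0] p2 ![0,1,1] ![1,0,1] ![0,3,0] = -3 := by decide
lemma k2_5_4 : Kz' ![0,2,0] p2 ![0,1,1] ![1,0,1] ![1,0,2] = -63 := by decide
lemma k2_5_5 : Kz' ![0,2,0] p2 ![0,1,1] ![1,0,1] ![1,1,1] = -21 := by decide
lemma k2_5_6 : Kz' ![0,2,0] p2 ![0,1,1] ![1,0,1] ![1,2,0] = -7 := by decide
lemma k2_5_7 : Kz' ![0,2,0] p2 ![0,1,1] ![1,0,1] ![2,0,1] = -49 := by decide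
lemma k2_5_8 : Kz' ![0,2,0] p2 ![0,1,1] ![1,0,1] ![2,1,0] = 209 := by decide
lemma k2_5_9 : Kz' ![0,2,0] p2 ![0,1,1] ![1,0,1] ![3,0,0] = -171 := by decide
lemma k2_6_0 : Kz' ![0,2,0] p2 ![0,1,1] ![1,1,0] ![0,0,3] = -27 := by decide
lemma k2_6_1 : Kz' ![0,2,0] p2 ![0,1,1] ![1,1,0] ![0,1,2] = -9 := by decide
lemma k2_6_2 : Kz' ![0,2,0] p2 ![0,1,1] ![1,1,0] ![0,2,1] = -3 := by decide
lemma k2_6_3 : Kz' ![0,2,0] p2 ![0,1,1] ![1,1,0] ![0,3,0] = -1 := by decide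
lemma k2_6_4 : Kz' ![0,2,0] p2 ![0,1,1] ![1,1,0] ![1,0,2] = -99 := by decide
lemma k2_6_5 : Kz' ![0,2,0] p2 ![0,1,1] ![1,1,0] ![1,1,1] = -33 := by decide
lemma k2_6_6 : Kz' ![0,2,0] p2 ![0,1,1] ![1,1,0] ![1,2,0] = -11 := by decide
lemma k2_6_7 : Kz' ![0,2,0] p2 ![0,1,1] ![1,1,0] ![2,0,1] = -363 := by decide
lemma k2_6_8 : Kz' ![0,2,0] p2 ![0,1,1] ![1,1,0] ![2,1,0] = -121 := by decide
lemma k2_6_9 : Kz' ![0,2,0] p2 ![0,1,1] ![1,1,0] ![3,0,0] = -1331 := by decide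
lemma k2_7_0 : Kz' ![0,2,0] p2 ![0,1,1] ![2,0,0] ![0,0,3] = -230 := by decide
lemma k2_7_1 : Kz' ![0,2,0] p2 ![0,1,1] ![2,0,0] ![0,1,2] = -198 := by decide
lemma k2_7_2 : Kz' ![0,2,0] p2 ![0,1,1] ![2,0,0] ![0,2,1] = -66 := by decide
lemma k2_7_3 : Kz' ![0,2,0] p2 ![0,1,1] ![2,0,0] ![0,3,0] = -22 := by decide
lemma k2_7_4 : Kz' ![0,2,0] p2 ![0,1,1] ![2,0,0] ![1,0,2] = -530 := by decide
lemma k2_7_5 : Kz' ![0,2,0] p2 ![0,1,1] ![2,0,0] ![1,1,1] = -402 := by decide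
lemma k2_7_6 : Kz' ![0,2,0] p2 ![0,1,1] ![2,0,0] ![1,2,0] = -134 := by decide
lemma k2_7_7 : Kz' ![0,2,0] p2 ![0,1,1] ![2,0,0] ![2,0,1] = -858 := by decide
lemma k2_7_8 : Kz' ![0,2,0] p2 ![0,1,1] ![2,0,0] ![2,1,0] = -286 := by decide
lemma k2_7_9 : Kz' ![0,2,0] p2 ![0,1,1] ![2,0,0] ![3,0,0] = -1742 := by decide
lemma k2_8_0 : Kz' ![0,2,0] p2 ![1,0,1] ![1,1,0] ![0,0,3] = 41 := by decide
lemma k2_8_1 : Kz' ![0,2,0] p2 ![1,0,1] ![1,1,0] ![0,1,2] = 57 := by decide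
lemma k2_8_2 : Kz' ![0,2,0] p2 ![1,0,1] ![1,1,0] ![0,2,1] = -7 := by decide
lemma k2_8_3 : Kz' ![0,2,0] p2 ![1,0,1] ![1,1,0] ![0,3,0] = -11 := by decide
lemma k2_8_4 : Kz' ![0,2,0] p2 ![1,0,1] ![1,1,0] ![1,0,2] = -49 := by decide
lemma k2_8_5 : Kz' ![0,2,0] p2 ![1,0,1] ![1,1,0] ![1,1,1] = -77 := by decide
lemma k2_8_6 : Kz' ![0,2,0] p2 ![1,0,1] ![1,1,0] ![1,2,0] = -121 := by decide
lemma k2_8_7 : Kz' ![0,2,0] p2 ![1,0,1] ![1,1,0] ![2,0,1] = -847 := by decide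
lemma k2_8_8 : Kz' ![0,2,0] p2 ![1,0,1] ![1,1,0] ![2,1,0] = -1331 := by decide
lemma k2_8_9 : Kz' ![0,2,0] p2 ![1,0,1] ![1,1,0] ![3,0,0] = -2977 := by decide
lemma k2_9_0 : Kz' ![0,2,0] p2 ![1,0,1] ![2,0,0] ![0,0,3] = -446 := by decide
lemma k2_9_1 : Kz' ![0,2,0] p2 ![1,0,1] ![2,0,0] ![0,1,2] = -394 := by decide
lemma k2_9_2 : Kz' ![0,2,0] p2 ![1,0,1] ![2,0,0] ![0,2,1] = -154 := by decide
lemma k2_9_3 : Kz' ![0,2,0] p2 ![1,0,1] ![2,0,0] ![0,3,0] = -134 := by decide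
lemma k2_9_4 : Kz' ![0,2,0] p2 ![1,0,1] ![2,0,0] ![1,0,2] = -1078 := by decide
lemma k2_9_5 : Kz' ![0,2,0] p2 ![1,0,1] ![2,0,0] ![1,1,1] = -938 := by decide
lemma k2_9_6 : Kz' ![0,2,0] p2 ![1,0,1] ![2,0,0] ![1,2,0] = -286 := by decide
lemma k2_9_7 : Kz' ![0,2,0] p2 ![1,0,1] ![2,0,0] ![2,0,1] = -2002 := by decide
lemma k2_9_8 : Kz' ![0,2,0] p2 ![1,0,1] ![2,0,0] ![2,1,0] = -1742 := by decide
lemma k2_9_9 : Kz' ![0,2,0] p2 ![1,0,1] ![2,0,0] ![3,0,0] = -3718 := by decide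
lemma solve2 (lam : (DeltaFin 3 : Finset _) → ℂ)
    (key : ∀ (p : (Fin 3 → ℤ) → ℤ) (a b : ((DeltaFin 2).erase ![0,2,0] : Finset _)),
      ∑ c : DeltaFin 3, lam c * ((Kz ![0,2,0] p a.1 b.1 c.1 : ℤ) : ℂ) = 0) :
    ∀ c : (DeltaFin 3 : Finset _), lam c = 0 := by
  have h0 := key p1 ⟨![0,0,2], by decide⟩ ⟨![1,0,1], by decide⟩
  rw [sum_D3_expand] at h0
  simp only [Kz_eq, k2_0_0, k2_0_1, k2_0_2, k2_0_3, k2_0_4, k2_0_5, k2_0_6, k2_0_7, k2_0_8, k2_0_9] at h0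
  push_cast at h0
  have h1 := key p2 ⟨![0,0,2], by decide⟩ ⟨![0,1,1], by decide⟩
  rw [sum_D3_expand] at h1
  simp only [Kz_eq, k2_1_0, k2_1_1, k2_1_2, k2_1_3, k2_1_4, k2_1_5, k2_1_6, k2_1_7, k2_1_8, k2_1_9] at h1
  push_cast at h1
  have h2 := key p2 ⟨![0,0,2], by decide⟩ ⟨![1,0,1], by decide⟩
  rw [sum_D3_expand] at h2
  simp only [Kz_eq, k2_2_0, k2_2_1, k2_2_2, k2_2_3, k2_2_4, k2_2_5, k2_2_6, k2_2_7, k2_2_8, k2_2_9] at h2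
  push_cast at h2
  have h3 := key p2 ⟨![0,0,2], by decide⟩ ⟨![1,1,0], by decide⟩
  rw [sum_D3_expand] at h3
  simp only [Kz_eq, k2_3_0, k2_3_1, k2_3_2, k2_3_3, k2_3_4, k2_3_5, k2_3_6, k2_3_7, k2_3_8, k2_3_9] at h3
  push_cast at h3
  have h4 := key p2 ⟨![0,0,2], by decide⟩ ⟨![2,0,0], by decide⟩
  rw [sum_D3_expand] at h4
  simp only [Kz_eq, k2_4_0, k2_4_1, k2_4_2, k2_4_3, k2_4_4, k2_4_5, k2_4_6, k2_4_7, k2_4_8, k2_4_9] at h4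
  push_cast at h4
  have h5 := key p2 ⟨![0,1,1], by decide⟩ ⟨![1,0,1], by decide⟩
  rw [sum_D3_expand] at h5
  simp only [Kz_eq, k2_5_0, k2_5_1, k2_5_2, k2_5_3, k2_5_4, k2_5_5, k2_5_6, k2_5_7, k2_5_8, k2_5_9] at h5
  push_cast at h5
  have h6 := key p2 ⟨![0,1,1], by decide⟩ ⟨![1,1,0], by decide⟩
  rw [sum_D3_expand] at h6
  simp only [Kz_eq, k2_6_0, k2_6_1, k2_6_2, k2_6_3, k2_6_4, k2_6_5, k2_6_6, k2_6_7, k2_6_8, k2_6_9] at h6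
  push_cast at h6
  have h7 := key p2 ⟨![0,1,1], by decide⟩ ⟨![2,0,0], by decide⟩
  rw [sum_D3_expand] at h7
  simp only [Kz_eq, k2_7_0, k2_7_1, k2_7_2, k2_7_3, k2_7_4, k2_7_5, k2_7_6, k2_7_7, k2_7_8, k2_7_9] at h7
  push_cast at h7
  have h8 := key p2 ⟨![1,0,1], by decide⟩ ⟨![1,1,0], by decide⟩
  rw [sum_D3_expand] at h8
  simp only [Kz_eq, k2_8_0, k2_8_1, k2_8_2, k2_8_3, k2_8_4, k2_8_5, k2_8_6, k2_8_7, k2_8_8, k2_8_9] at h8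
  push_cast at h8
  have h9 := key p2 ⟨![1,0,1], by decide⟩ ⟨![2,0,0], by decide⟩
  rw [sum_D3_expand] at h9
  simp only [Kz_eq, k2_9_0, k2_9_1, k2_9_2, k2_9_3, k2_9_4, k2_9_5, k2_9_6, k2_9_7, k2_9_8, k2_9_9] at h9
  push_cast at h9
  intro c
  obtain ⟨cv, hcv⟩ := c
  have hd : cv = ![0,0,3] ∨ cv = ![0,1,2] ∨ cv = ![0,2,1] ∨ cv = ![0,3,0] ∨ cv = ![1,0,2] ∨ cv = ![1,1,1] ∨ cv = ![1,2,0] ∨ cv = ![2,0,1] ∨ cv = ![2,1,0] ∨ cv = ![3,0,0] := by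
    rw [show DeltaFin 3 = {![0,0,3], ![0,1,2], ![0,2,1], ![0,3,0], ![1,0,2], ![1,1,1], ![1,2,0], ![2,0,1], ![2,1,0], ![3,0,0]} from by decide] at hcv
    simpa [Finset.mem_insert] using hcv
  rcases hd with rfl|rfl|rfl|rfl|rfl|rfl|rfl|rfl|rfl|rfl
  · linear_combination ((-169 : ℂ)/162) * h0 + ((-20449 : ℂ)/32400) * h1 + ((20449 : ℂ)/32400) * h2 + ((1859 : ℂ)/32400) * h3 + ((-1859 : ℂ)/7200) * h4 + ((1483 : ℂ)/2025) * h5 + ((-29723 : ℂ)/64800) * h6 + ((-1417 : ℂ)/14400) * h7 + ((377 : ℂ)/2400) * h8 + ((169 : ℂ)/1600) * h9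
  · linear_combination ((13 : ℂ)/162) * h0 + ((1573 : ℂ)/32400) * h1 + ((-30311 : ℂ)/16200) * h2 + ((41267 : ℂ)/64800) * h3 + ((1651 : ℂ)/3600) * h4 + ((-36119 : ℂ)/64800) * h5 + ((48481 : ℂ)/129600) * h6 + ((-67 : ℂ)/7200) * h7 + ((-1459 : ℂ)/4800) * h8 + ((-91 : ℂ)/800) * h9
  · linear_combination ((-1 : ℂ)/648) * h0 + ((-121 : ℂ)/129600) * h1 + ((166333 : ℂ)/129600) * h2 + ((-79531 : ℂ)/129600) * h3 + ((-4943 : ℂ)/28800) * h4 + ((-5051 : ℂ)/12960) * h5 + ((35467 : ℂ)/259200) * h6 + ((5411 : ℂ)/57600) * h7 + ((1007 : ℂ)/9600) * h8 + ((53 : ℂ)/6400) * h9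
  · linear_combination ((-361 : ℂ)/1600) * h2 + ((437 : ℂ)/3200) * h3 + ((19 : ℂ)/3200) * h4 + ((437 : ℂ)/3200) * h5 + ((-529 : ℂ)/6400) * h6 + ((-23 : ℂ)/6400) * h7 + ((-23 : ℂ)/6400) * h8 + ((-1 : ℂ)/6400) * h9
  · linear_combination ((91 : ℂ)/162) * h0 + ((3503 : ℂ)/1620) * h1 + ((-11011 : ℂ)/32400) * h2 + ((-30433 : ℂ)/64800) * h3 + ((1001 : ℂ)/7200) * h4 + ((9607 : ℂ)/64800) * h5 + ((29461 : ℂ)/129600) * h6 + ((583 : ℂ)/14400) * h7 + ((161 : ℂ)/4800) * h8 + ((-91 : ℂ)/1600) * h9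
  · linear_combination ((-7 : ℂ)/324) * h0 + ((-83953 : ℂ)/64800) * h1 + ((57709 : ℂ)/64800) * h2 + ((77 : ℂ)/64800) * h3 + ((-3299 : ℂ)/14400) * h4 + ((-73 : ℂ)/1296) * h5 + ((-23729 : ℂ)/129600) * h6 + ((203 : ℂ)/28800) * h7 + ((371 : ℂ)/4800) * h8 + ((189 : ℂ)/3200) * h9
  · linear_combination ((361 : ℂ)/1600) * h1 + ((-247 : ℂ)/800) * h2 + ((299 : ℂ)/3200) * h3 + ((73 : ℂ)/1600) * h4 + ((337 : ℂ)/3200) * h5 + ((-23 : ℂ)/6400) * h6 + ((-81 : ℂ)/3200) * h7 + ((-161 : ℂ)/6400) * h8 + ((-7 : ℂ)/3200) * h9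
  · linear_combination ((-49 : ℂ)/648) * h0 + ((-119653 : ℂ)/129600) * h1 + ((5929 : ℂ)/129600) * h2 + ((29537 : ℂ)/129600) * h3 + ((-539 : ℂ)/28800) * h4 + ((-511 : ℂ)/2592) * h5 + ((-9449 : ℂ)/259200) * h6 + ((-217 : ℂ)/57600) * h7 + ((-469 : ℂ)/9600) * h8 + ((49 : ℂ)/6400) * h9
  · linear_combination ((247 : ℂ)/800) * h1 + ((-169 : ℂ)/1600) * h2 + ((-133 : ℂ)/3200) * h3 + ((91 : ℂ)/3200) * h4 + ((159 : ℂ)/3200) * h5 + ((161 : ℂ)/6400) * h6 + ((-7 : ℂ)/6400) * h7 + ((7 : ℂ)/6400) * h8 + ((-49 : ℂ)/6400) * h9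
  · linear_combination ((169 : ℂ)/1600) * h1 + ((-91 : ℂ)/3200) * h3 + ((91 : ℂ)/3200) * h5 + ((7 : ℂ)/6400) * h6 + ((49 : ℂ)/6400) * h8

lemma k3_0_0 : Kz' ![1,0,1] p1 ![0,0,2] ![0,1,1] ![0,0,3] = 1 := by decide
lemma k3_0_1 : Kz' ![1,0,1] p1 ![0,0,2] ![0,1,1] ![0,1,2] = 1 := by decide
lemma k3_0_2 : Kz' ![1,0,1] p1 ![0,0,2] ![0,1,1] ![0,2,1] = 1 := by decide
lemma k3_0_3 : Kz' ![1,0,1] p1 ![0,0,2] ![0,1,1] ![0,3,0] = 1 := by decide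
lemma k3_0_4 : Kz' ![1,0,1] p1 ![0,0,2] ![0,1,1] ![1,0,2] = 1 := by decide
lemma k3_0_5 : Kz' ![1,0,1] p1 ![0,0,2] ![0,1,1] ![1,1,1] = 1 := by decide
lemma k3_0_6 : Kz' ![1,0,1] p1 ![0,0,2] ![0,1,1] ![1,2,0] = 1 := by decide
lemma k3_0_7 : Kz' ![1,0,1] p1 ![0,0,2] ![0,1,1] ![2,0,1] = 1 := by decide
lemma k3_0_8 : Kz' ![1,0,1] p1 ![0,0,2] ![0,1,1] ![2,1,0] = 1 := by decide
lemma k3_0_9 : Kz' ![1,0,1] p1 ![0,0,2] ![0,1,1] ![3,0,0] = 1 := by decide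
lemma k3_1_0 : Kz' ![1,0,1] p2 ![0,0,2] ![0,1,1] ![0,0,3] = 8 := by decide
lemma k3_1_1 : Kz' ![1,0,1] p2 ![0,0,2] ![0,1,1] ![0,1,2] = 12 := by decide
lemma k3_1_2 : Kz' ![1,0,1] p2 ![0,0,2] ![0,1,1] ![0,2,1] = 18 := by decide
lemma k3_1_3 : Kz' ![1,0,1] p2 ![0,0,2] ![0,1,1] ![0,3,0] = 27 := by decide
lemma k3_1_4 : Kz' ![1,0,1] p2 ![0,0,2] ![0,1,1] ![1,0,2] = 4 := by decide
lemma k3_1_5 : Kz' ![1,0,1] p2 ![0,0,2] ![0,1,1] ![1,1,1] = 6 := by decide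
lemma k3_1_6 : Kz' ![1,0,1] p2 ![0,0,2] ![0,1,1] ![1,2,0] = 9 := by decide
lemma k3_1_7 : Kz' ![1,0,1] p2 ![0,0,2] ![0,1,1] ![2,0,1] = 2 := by decide
lemma k3_1_8 : Kz' ![1,0,1] p2 ![0,0,2] ![0,1,1] ![2,1,0] = 3 := by decide
lemma k3_1_9 : Kz' ![1,0,1] p2 ![0,0,2] ![0,1,1] ![3,0,0] = 1 := by decide
lemma k3_2_0 : Kz' ![1,0,1] p2 ![0,0,2] ![0,2,0] ![0,0,3] = 24 := by decide
lemma k3_2_1 : Kz' ![1,0,1] p2 ![0,0,2] ![0,2,0] ![0,1,2] = 38 := by decide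
lemma k3_2_2 : Kz' ![1,0,1] p2 ![0,0,2] ![0,2,0] ![0,2,1] = 60 := by decide
lemma k3_2_3 : Kz' ![1,0,1] p2 ![0,0,2] ![0,2,0] ![0,3,0] = 95 := by decide
lemma k3_2_4 : Kz' ![1,0,1] p2 ![0,0,2] ![0,2,0] ![1,0,2] = 12 := by decide
lemma k3_2_5 : Kz' ![1,0,1] p2 ![0,0,2] ![0,2,0] ![1,1,1] = 19 := by decide
lemma k3_2_6 : Kz' ![1,0,1] p2 ![0,0,2] ![0,2,0] ![1,2,0] = 30 := by decide
lemma k3_2_7 : Kz' ![1,0,1] p2 ![0,0,2] ![0,2,0] ![2,0,1] = 6 := by decide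
lemma k3_2_8 : Kz' ![1,0,1] p2 ![0,0,2] ![0,2,0] ![2,1,0] = -171 := by decide
lemma k3_2_9 : Kz' ![1,0,1] p2 ![0,0,2] ![0,2,0] ![3,0,0] = -472 := by decide
lemma k3_3_0 : Kz' ![1,0,1] p2 ![0,0,2] ![1,1,0] ![0,0,3] = 4 := by decide
lemma k3_3_1 : Kz' ![1,0,1] p2 ![0,0,2] ![1,1,0] ![0,1,2] = 44 := by decide
lemma k3_3_2 : Kz' ![1,0,1] p2 ![0,0,2] ![1,1,0] ![0,2,1] = 123 := by decide
lemma k3_3_3 : Kz' ![1,0,1] p2 ![0,0,2] ![1,1,0] ![0,3,0] = 289 := by decide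
lemma k3_3_4 : Kz' ![1,0,1] p2 ![0,0,2] ![1,1,0] ![1,0,2] = 2 := by decide
lemma k3_3_5 : Kz' ![1,0,1] p2 ![0,0,2] ![1,1,0] ![1,1,1] = 22 := by decide
lemma k3_3_6 : Kz' ![1,0,1] p2 ![0,0,2] ![1,1,0] ![1,2,0] = 242 := by decide
lemma k3_3_7 : Kz' ![1,0,1] p2 ![0,0,2] ![1,1,0] ![2,0,1] = 1 := by decide
lemma k3_3_8 : Kz' ![1,0,1] p2 ![0,0,2] ![1,1,0] ![2,1,0] = 11 := by decide
lemma k3_3_9 : Kz' ![1,0,1] p2 ![0,0,2] ![1,1,0] ![3,0,0] = -312 := by decide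
lemma k3_4_0 : Kz' ![1,0,1] p2 ![0,0,2] ![2,0,0] ![0,0,3] = 0 := by decide
lemma k3_4_1 : Kz' ![1,0,1] p2 ![0,0,2] ![2,0,0] ![0,1,2] = 50 := by decide
lemma k3_4_2 : Kz' ![1,0,1] p2 ![0,0,2] ![2,0,0] ![0,2,1] = 150 := by decide
lemma k3_4_3 : Kz' ![1,0,1] p2 ![0,0,2] ![2,0,0] ![0,3,0] = 543 := by decide
lemma k3_4_4 : Kz' ![1,0,1] p2 ![0,0,2] ![2,0,0] ![1,0,2] = 0 := by decide
lemma k3_4_5 : Kz' ![1,0,1] p2 ![0,0,2] ![2,0,0] ![1,1,1] = 25 := by decide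
lemma k3_4_6 : Kz' ![1,0,1] p2 ![0,0,2] ![2,0,0] ![1,2,0] = 550 := by decide
lemma k3_4_7 : Kz' ![1,0,1] p2 ![0,0,2] ![2,0,0] ![2,0,1] = 0 := by decide
lemma k3_4_8 : Kz' ![1,0,1] p2 ![0,0,2] ![2,0,0] ![2,1,0] = 325 := by decide
lemma k3_4_9 : Kz' ![1,0,1] p2 ![0,0,2] ![2,0,0] ![3,0,0] = 0 := by decide
lemma k3_5_0 : Kz' ![1,0,1] p2 ![0,1,1] ![0,2,0] ![0,0,3] = 16 := by decide
lemma k3_5_1 : Kz' ![1,0,1] p2 ![0,1,1] ![0,2,0] ![0,1,2] = 27 := by decide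
lemma k3_5_2 : Kz' ![1,0,1] p2 ![0,1,1] ![0,2,0] ![0,2,1] = 45 := by decide
lemma k3_5_3 : Kz' ![1,0,1] p2 ![0,1,1] ![0,2,0] ![0,3,0] = 75 := by decide
lemma k3_5_4 : Kz' ![1,0,1] p2 ![0,1,1] ![0,2,0] ![1,0,2] = 9 := by decide
lemma k3_5_5 : Kz' ![1,0,1] p2 ![0,1,1] ![0,2,0] ![1,1,1] = 15 := by decide
lemma k3_5_6 : Kz' ![1,0,1] p2 ![0,1,1] ![0,2,0] ![1,2,0] = 25 := by decide
lemma k3_5_7 : Kz' ![1,0,1] p2 ![0,1,1] ![0,2,0] ![2,0,1] = 5 := by decide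
lemma k3_5_8 : Kz' ![1,0,1] p2 ![0,1,1] ![0,2,0] ![2,1,0] = -253 := by decide
lemma k3_5_9 : Kz' ![1,0,1] p2 ![0,1,1] ![0,2,0] ![3,0,0] = -607 := by decide
lemma k3_6_0 : Kz' ![1,0,1] p2 ![0,1,1] ![1,1,0] ![0,0,3] = -32 := by decide
lemma k3_6_1 : Kz' ![1,0,1] p2 ![0,1,1] ![1,1,0] ![0,1,2] = 9 := by decide
lemma k3_6_2 : Kz' ![1,0,1] p2 ![0,1,1] ![1,1,0] ![0,2,1] = 99 := by decide
lemma k3_6_3 : Kz' ![1,0,1] p2 ![0,1,1] ![1,1,0] ![0,3,0] = 305 := by decide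
lemma k3_6_4 : Kz' ![1,0,1] p2 ![0,1,1] ![1,1,0] ![1,0,2] = 3 := by decide
lemma k3_6_5 : Kz' ![1,0,1] p2 ![0,1,1] ![1,1,0] ![1,1,1] = 33 := by decide
lemma k3_6_6 : Kz' ![1,0,1] p2 ![0,1,1] ![1,1,0] ![1,2,0] = 363 := by decide
lemma k3_6_7 : Kz' ![1,0,1] p2 ![0,1,1] ![1,1,0] ![2,0,1] = 11 := by decide
lemma k3_6_8 : Kz' ![1,0,1] p2 ![0,1,1] ![1,1,0] ![2,1,0] = 121 := by decide
lemma k3_6_9 : Kz' ![1,0,1] p2 ![0,1,1] ![1,1,0] ![3,0,0] = -221 := by decide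
lemma k3_7_0 : Kz' ![1,0,1] p2 ![0,1,1] ![2,0,0] ![0,0,3] = -48 := by decide
lemma k3_7_1 : Kz' ![1,0,1] p2 ![0,1,1] ![2,0,0] ![0,1,2] = 3 := by decide
lemma k3_7_2 : Kz' ![1,0,1] p2 ![0,1,1] ![2,0,0] ![0,2,1] = 117 := by decide
lemma k3_7_3 : Kz' ![1,0,1] p2 ![0,1,1] ![2,0,0] ![0,3,0] = 643 := by decide
lemma k3_7_4 : Kz' ![1,0,1] p2 ![0,1,1] ![2,0,0] ![1,0,2] = 1 := by decide
lemma k3_7_5 : Kz' ![1,0,1] p2 ![0,1,1] ![2,0,0] ![1,1,1] = 39 := by decide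
lemma k3_7_6 : Kz' ![1,0,1] p2 ![0,1,1] ![2,0,0] ![1,2,0] = 737 := by decide
lemma k3_7_7 : Kz' ![1,0,1] p2 ![0,1,1] ![2,0,0] ![2,0,1] = 13 := by decide
lemma k3_7_8 : Kz' ![1,0,1] p2 ![0,1,1] ![2,0,0] ![2,1,0] = 507 := by decide
lemma k3_7_9 : Kz' ![1,0,1] p2 ![0,1,1] ![2,0,0] ![3,0,0] = 169 := by decide
lemma k3_8_0 : Kz' ![1,0,1] p2 ![0,2,0] ![1,1,0] ![0,0,3] = -103 := by decide
lemma k3_8_1 : Kz' ![1,0,1] p2 ![0,2,0] ![1,1,0] ![0,1,2] = -69 := by decide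
lemma k3_8_2 : Kz' ![1,0,1] p2 ![0,2,0] ![1,1,0] ![0,2,1] = 25 := by decide
lemma k3_8_3 : Kz' ![1,0,1] p2 ![0,2,0] ![1,1,0] ![0,3,0] = 275 := by decide
lemma k3_8_4 : Kz' ![1,0,1] p2 ![0,2,0] ![1,1,0] ![1,0,2] = 5 := by decide
lemma k3_8_5 : Kz' ![1,0,1] p2 ![0,2,0] ![1,1,0] ![1,1,1] = 55 := by decide
lemma k3_8_6 : Kz' ![1,0,1] p2 ![0,2,0] ![1,1,0] ![1,2,0] = 605 := by decide
lemma k3_8_7 : Kz' ![1,0,1] p2 ![0,2,0] ![1,1,0] ![2,0,1] = 121 := by decide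
lemma k3_8_8 : Kz' ![1,0,1] p2 ![0,2,0] ![1,1,0] ![2,1,0] = 1331 := by decide
lemma k3_8_9 : Kz' ![1,0,1] p2 ![0,2,0] ![1,1,0] ![3,0,0] = 2301 := by decide
lemma k3_9_0 : Kz' ![1,0,1] p2 ![0,2,0] ![2,0,0] ![0,0,3] = -106 := by decide
lemma k3_9_1 : Kz' ![1,0,1] p2 ![0,2,0] ![2,0,0] ![0,1,2] = -46 := by decide
lemma k3_9_2 : Kz' ![1,0,1] p2 ![0,2,0] ![2,0,0] ![0,2,1] = 110 := by decide
lemma k3_9_3 : Kz' ![1,0,1] p2 ![0,2,0] ![2,0,0] ![0,3,0] = 930 := by decide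
lemma k3_9_4 : Kz' ![1,0,1] p2 ![0,2,0] ![2,0,0] ![1,0,2] = 22 := by decide
lemma k3_9_5 : Kz' ![1,0,1] p2 ![0,2,0] ![2,0,0] ![1,1,1] = 186 := by decide
lemma k3_9_6 : Kz' ![1,0,1] p2 ![0,2,0] ![2,0,0] ![1,2,0] = 1430 := by decide
lemma k3_9_7 : Kz' ![1,0,1] p2 ![0,2,0] ![2,0,0] ![2,0,1] = 286 := by decide
lemma k3_9_8 : Kz' ![1,0,1] p2 ![0,2,0] ![2,0,0] ![2,1,0] = 2418 := by decide
lemma k3_9_9 : Kz' ![1,0,1] p2 ![0,2,0] ![2,0,0] ![3,0,0] = 3718 := by decide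
lemma solve3 (lam : (DeltaFin 3 : Finset _) → ℂ)
    (key : ∀ (p : (Fin 3 → ℤ) → ℤ) (a b : ((DeltaFin 2).erase ![1,0,1] : Finset _)),
      ∑ c : DeltaFin 3, lam c * ((Kz ![1,0,1] p a.1 b.1 c.1 : ℤ) : ℂ) = 0) :
    ∀ c : (DeltaFin 3 : Finset _), lam c = 0 := by
  have h0 := key p1 ⟨![0,0,2], by decide⟩ ⟨![0,1,1], by decide⟩
  rw [sum_D3_expand] at h0
  simp only [Kz_eq, k3_0_0, k3_0_1, k3_0_2, k3_0_3, k3_0_4, k3_0_5, k3_0_6, k3_0_7, k3_0_8, k3_0_9] at h0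
  push_cast at h0
  have h1 := key p2 ⟨![0,0,2], by decide⟩ ⟨![0,1,1], by decide⟩
  rw [sum_D3_expand] at h1
  simp only [Kz_eq, k3_1_0, k3_1_1, k3_1_2, k3_1_3, k3_1_4, k3_1_5, k3_1_6, k3_1_7, k3_1_8, k3_1_9] at h1
  push_cast at h1
  have h2 := key p2 ⟨![0,0,2], by decide⟩ ⟨![0,2,0], by decide⟩
  rw [sum_D3_expand] at h2
  simp only [Kz_eq, k3_2_0, k3_2_1, k3_2_2, k3_2_3, k3_2_4, k3_2_5, k3_2_6, k3_2_7, k3_2_8, k3_2_9] at h2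
  push_cast at h2
  have h3 := key p2 ⟨![0,0,2], by decide⟩ ⟨![1,1,0], by decide⟩
  rw [sum_D3_expand] at h3
  simp only [Kz_eq, k3_3_0, k3_3_1, k3_3_2, k3_3_3, k3_3_4, k3_3_5, k3_3_6, k3_3_7, k3_3_8, k3_3_9] at h3
  push_cast at h3
  have h4 := key p2 ⟨![0,0,2], by decide⟩ ⟨![2,0,0], by decide⟩
  rw [sum_D3_expand] at h4
  simp only [Kz_eq, k3_4_0, k3_4_1, k3_4_2, k3_4_3, k3_4_4, k3_4_5, k3_4_6, k3_4_7, k3_4_8, k3_4_9] at h4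
  push_cast at h4
  have h5 := key p2 ⟨![0,1,1], by decide⟩ ⟨![0,2,0], by decide⟩
  rw [sum_D3_expand] at h5
  simp only [Kz_eq, k3_5_0, k3_5_1, k3_5_2, k3_5_3, k3_5_4, k3_5_5, k3_5_6, k3_5_7, k3_5_8, k3_5_9] at h5
  push_cast at h5
  have h6 := key p2 ⟨![0,1,1], by decide⟩ ⟨![1,1,0], by decide⟩
  rw [sum_D3_expand] at h6
  simp only [Kz_eq, k3_6_0, k3_6_1, k3_6_2, k3_6_3, k3_6_4, k3_6_5, k3_6_6, k3_6_7, k3_6_8, k3_6_9] at h6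
  push_cast at h6
  have h7 := key p2 ⟨![0,1,1], by decide⟩ ⟨![2,0,0], by decide⟩
  rw [sum_D3_expand] at h7
  simp only [Kz_eq, k3_7_0, k3_7_1, k3_7_2, k3_7_3, k3_7_4, k3_7_5, k3_7_6, k3_7_7, k3_7_8, k3_7_9] at h7
  push_cast at h7
  have h8 := key p2 ⟨![0,2,0], by decide⟩ ⟨![1,1,0], by decide⟩
  rw [sum_D3_expand] at h8
  simp only [Kz_eq, k3_8_0, k3_8_1, k3_8_2, k3_8_3, k3_8_4, k3_8_5, k3_8_6, k3_8_7, k3_8_8, k3_8_9] at h8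
  push_cast at h8
  have h9 := key p2 ⟨![0,2,0], by decide⟩ ⟨![2,0,0], by decide⟩
  rw [sum_D3_expand] at h9
  simp only [Kz_eq, k3_9_0, k3_9_1, k3_9_2, k3_9_3, k3_9_4, k3_9_5, k3_9_6, k3_9_7, k3_9_8, k3_9_9] at h9
  push_cast at h9
  intro c
  obtain ⟨cv, hcv⟩ := c
  have hd : cv = ![0,0,3] ∨ cv = ![0,1,2] ∨ cv = ![0,2,1] ∨ cv = ![0,3,0] ∨ cv = ![1,0,2] ∨ cv = ![1,1,1] ∨ cv = ![1,2,0] ∨ cv = ![2,0,1] ∨ cv = ![2,1,0] ∨ cv = ![3,0,0] := by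
    rw [show DeltaFin 3 = {![0,0,3], ![0,1,2], ![0,2,1], ![0,3,0], ![1,0,2], ![1,1,1], ![1,2,0], ![2,0,1], ![2,1,0], ![3,0,0]} from by decide] at hcv
    simpa [Finset.mem_insert] using hcv
  rcases hd with rfl|rfl|rfl|rfl|rfl|rfl|rfl|rfl|rfl|rfl
  · linear_combination ((196 : ℂ)/25) * h0 + ((-196 : ℂ)/225) * h1 + ((-77 : ℂ)/225) * h2 + ((112 : ℂ)/225) * h3 + ((-7 : ℂ)/45) * h4 + ((-121 : ℂ)/900) * h5 + ((-41 : ℂ)/450) * h6 + ((7 : ℂ)/180) * h7 + ((-8 : ℂ)/75) * h8 + ((1 : ℂ)/30) * h9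
  · linear_combination ((-266 : ℂ)/25) * h0 + ((266 : ℂ)/225) * h1 + ((209 : ℂ)/450) * h2 + ((-329 : ℂ)/450) * h3 + ((4 : ℂ)/15) * h4 + ((2299 : ℂ)/12600) * h5 + ((269 : ℂ)/1800) * h6 + ((-19 : ℂ)/210) * h7 + ((93 : ℂ)/700) * h8 + ((-11 : ℂ)/280) * h9
  · linear_combination ((361 : ℂ)/100) * h0 + ((-361 : ℂ)/900) * h1 + ((-3971 : ℂ)/25200) * h2 + ((3163 : ℂ)/12600) * h3 + ((-137 : ℂ)/1680) * h4 + ((-43681 : ℂ)/705600) * h5 + ((-3769 : ℂ)/88200) * h6 + ((293 : ℂ)/15680) * h7 + ((-167 : ℂ)/4200) * h8 + ((19 : ℂ)/1680) * h9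
  · linear_combination ((25 : ℂ)/1008) * h3 + ((-19 : ℂ)/1008) * h4 + ((-625 : ℂ)/28224) * h6 + ((475 : ℂ)/28224) * h7
  · linear_combination ((14 : ℂ)/25) * h0 + ((11 : ℂ)/225) * h1 + ((7 : ℂ)/225) * h2 + ((-1 : ℂ)/50) * h3 + ((-1 : ℂ)/90) * h4 + ((229 : ℂ)/12600) * h5 + ((-17 : ℂ)/600) * h6 + ((41 : ℂ)/1260) * h7 + ((59 : ℂ)/2100) * h8 + ((-13 : ℂ)/840) * h9
  · linear_combination ((-19 : ℂ)/50) * h0 + ((23 : ℂ)/150) * h1 + ((-11 : ℂ)/2100) * h2 + ((-38 : ℂ)/1575) * h3 + ((-23 : ℂ)/1260) * h4 + ((-1689 : ℂ)/39200) * h5 + ((2501 : ℂ)/44100) * h6 + ((-323 : ℂ)/70560) * h7 + ((-19 : ℂ)/700) * h8 + ((3 : ℂ)/280) * h9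
  · linear_combination ((1 : ℂ)/36) * h1 + ((-25 : ℂ)/1008) * h2 + ((-25 : ℂ)/1008) * h3 + ((5 : ℂ)/252) * h4 + ((625 : ℂ)/28224) * h5 + ((475 : ℂ)/28224) * h6 + ((-193 : ℂ)/14112) * h7
  · linear_combination ((1 : ℂ)/100) * h0 + ((-101 : ℂ)/900) * h1 + ((239 : ℂ)/25200) * h2 + ((37 : ℂ)/1400) * h3 + ((-1 : ℂ)/5040) * h4 + ((26479 : ℂ)/705600) * h5 + ((-381 : ℂ)/9800) * h6 + ((157 : ℂ)/141120) * h7 + ((53 : ℂ)/4200) * h8 + ((-1 : ℂ)/1680) * h9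
  · linear_combination ((-1 : ℂ)/18) * h1 + ((11 : ℂ)/252) * h2 + ((-1 : ℂ)/1008) * h3 + ((-1 : ℂ)/1008) * h4 + ((-475 : ℂ)/14112) * h5 + ((25 : ℂ)/28224) * h6 + ((19 : ℂ)/28224) * h7
  · linear_combination ((1 : ℂ)/36) * h1 + ((-19 : ℂ)/1008) * h2 + ((1 : ℂ)/1008) * h3 + ((361 : ℂ)/28224) * h5 + ((-19 : ℂ)/28224) * h6

lemma k4_0_0 : Kz' ![1,1,0] p1 ![0,0,2] ![0,1,1] ![0,0,3] = 1 := by decide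
lemma k4_0_1 : Kz' ![1,1,0] p1 ![0,0,2] ![0,1,1] ![0,1,2] = 1 := by decide
lemma k4_0_2 : Kz' ![1,1,0] p1 ![0,0,2] ![0,1,1] ![0,2,1] = 1 := by decide
lemma k4_0_3 : Kz' ![1,1,0] p1 ![0,0,2] ![0,1,1] ![0,3,0] = 1 := by decide
lemma k4_0_4 : Kz' ![1,1,0] p1 ![0,0,2] ![0,1,1] ![1,0,2] = 1 := by decide
lemma k4_0_5 : Kz' ![1,1,0] p1 ![0,0,2] ![0,1,1] ![1,1,1] = 1 := by decide
lemma k4_0_6 : Kz' ![1,1,0] p1 ![0,0,2] ![0,1,1] ![1,2,0] = 1 := by decide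
lemma k4_0_7 : Kz' ![1,1,0] p1 ![0,0,2] ![0,1,1] ![2,0,1] = 1 := by decide
lemma k4_0_8 : Kz' ![1,1,0] p1 ![0,0,2] ![0,1,1] ![2,1,0] = 1 := by decide
lemma k4_0_9 : Kz' ![1,1,0] p1 ![0,0,2] ![0,1,1] ![3,0,0] = 1 := by decide
lemma k4_1_0 : Kz' ![1,1,0] p2 ![0,0,2] ![0,1,1] ![0,0,3] = 12 := by decide
lemma k4_1_1 : Kz' ![1,1,0] p2 ![0,0,2] ![0,1,1] ![0,1,2] = 18 := by decide
lemma k4_1_2 : Kz' ![1,1,0] p2 ![0,0,2] ![0,1,1] ![0,2,1] = 27 := by decide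
lemma k4_1_3 : Kz' ![1,1,0] p2 ![0,0,2] ![0,1,1] ![0,3,0] = 40 := by decide
lemma k4_1_4 : Kz' ![1,1,0] p2 ![0,0,2] ![0,1,1] ![1,0,2] = 4 := by decide
lemma k4_1_5 : Kz' ![1,1,0] p2 ![0,0,2] ![0,1,1] ![1,1,1] = 6 := by decide
lemma k4_1_6 : Kz' ![1,1,0] p2 ![0,0,2] ![0,1,1] ![1,2,0] = 9 := by decide
lemma k4_1_7 : Kz' ![1,1,0] p2 ![0,0,2] ![0,1,1] ![2,0,1] = -119 := by decide
lemma k4_1_8 : Kz' ![1,1,0] p2 ![0,0,2] ![0,1,1] ![2,1,0] = 2 := by decide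
lemma k4_1_9 : Kz' ![1,1,0] p2 ![0,0,2] ![0,1,1] ![3,0,0] = -445 := by decide
lemma k4_2_0 : Kz' ![1,1,0] p2 ![0,0,2] ![0,2,0] ![0,0,3] = 38 := by decide
lemma k4_2_1 : Kz' ![1,1,0] p2 ![0,0,2] ![0,2,0] ![0,1,2] = 60 := by decide
lemma k4_2_2 : Kz' ![1,1,0] p2 ![0,0,2] ![0,2,0] ![0,2,1] = 95 := by decide
lemma k4_2_3 : Kz' ![1,1,0] p2 ![0,0,2] ![0,2,0] ![0,3,0] = 150 := by decide
lemma k4_2_4 : Kz' ![1,1,0] p2 ![0,0,2] ![0,2,0] ![1,0,2] = 12 := by decide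
lemma k4_2_5 : Kz' ![1,1,0] p2 ![0,0,2] ![0,2,0] ![1,1,1] = 19 := by decide
lemma k4_2_6 : Kz' ![1,1,0] p2 ![0,0,2] ![0,2,0] ![1,2,0] = 30 := by decide
lemma k4_2_7 : Kz' ![1,1,0] p2 ![0,0,2] ![0,2,0] ![2,0,1] = -201 := by decide
lemma k4_2_8 : Kz' ![1,1,0] p2 ![0,0,2] ![0,2,0] ![2,1,0] = 6 := by decide
lemma k4_2_9 : Kz' ![1,1,0] p2 ![0,0,2] ![0,2,0] ![3,0,0] = -818 := by decide
lemma k4_3_0 : Kz' ![1,1,0] p2 ![0,0,2] ![1,0,1] ![0,0,3] = -28 := by decide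
lemma k4_3_1 : Kz' ![1,1,0] p2 ![0,0,2] ![1,0,1] ![0,1,2] = -4 := by decide
lemma k4_3_2 : Kz' ![1,1,0] p2 ![0,0,2] ![1,0,1] ![0,2,1] = 51 := by decide
lemma k4_3_3 : Kz' ![1,1,0] p2 ![0,0,2] ![1,0,1] ![0,3,0] = 181 := by decide
lemma k4_3_4 : Kz' ![1,1,0] p2 ![0,0,2] ![1,0,1] ![1,0,2] = -98 := by decide
lemma k4_3_5 : Kz' ![1,1,0] p2 ![0,0,2] ![1,0,1] ![1,1,1] = -14 := by decide
lemma k4_3_6 : Kz' ![1,1,0] p2 ![0,0,2] ![1,0,1] ![1,2,0] = -2 := by decide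
lemma k4_3_7 : Kz' ![1,1,0] p2 ![0,0,2] ![1,0,1] ![2,0,1] = -343 := by decide
lemma k4_3_8 : Kz' ![1,1,0] p2 ![0,0,2] ![1,0,1] ![2,1,0] = -49 := by decide
lemma k4_3_9 : Kz' ![1,1,0] p2 ![0,0,2] ![1,0,1] ![3,0,0] = -936 := by decide
lemma k4_4_0 : Kz' ![1,1,0] p2 ![0,0,2] ![2,0,0] ![0,0,3] = -150 := by decide
lemma k4_4_1 : Kz' ![1,1,0] p2 ![0,0,2] ![2,0,0] ![0,1,2] = -28 := by decide
lemma k4_4_2 : Kz' ![1,1,0] p2 ![0,0,2] ![2,0,0] ![0,2,1] = 73 := by decide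
lemma k4_4_3 : Kz' ![1,1,0] p2 ![0,0,2] ![2,0,0] ![0,3,0] = 314 := by decide
lemma k4_4_4 : Kz' ![1,1,0] p2 ![0,0,2] ![2,0,0] ![1,0,2] = -364 := by decide
lemma k4_4_5 : Kz' ![1,1,0] p2 ![0,0,2] ![2,0,0] ![1,1,1] = -75 := by decide
lemma k4_4_6 : Kz' ![1,1,0] p2 ![0,0,2] ![2,0,0] ![1,2,0] = -14 := by decide
lemma k4_4_7 : Kz' ![1,1,0] p2 ![0,0,2] ![2,0,0] ![2,0,1] = -975 := by decide
lemma k4_4_8 : Kz' ![1,1,0] p2 ![0,0,2] ![2,0,0] ![2,1,0] = -182 := by decide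
lemma k4_4_9 : Kz' ![1,1,0] p2 ![0,0,2] ![2,0,0] ![3,0,0] = -2366 := by decide
lemma k4_5_0 : Kz' ![1,1,0] p2 ![0,1,1] ![0,2,0] ![0,0,3] = 27 := by decide
lemma k4_5_1 : Kz' ![1,1,0] p2 ![0,1,1] ![0,2,0] ![0,1,2] = 45 := by decide
lemma k4_5_2 : Kz' ![1,1,0] p2 ![0,1,1] ![0,2,0] ![0,2,1] = 75 := by decide
lemma k4_5_3 : Kz' ![1,1,0] p2 ![0,1,1] ![0,2,0] ![0,3,0] = 125 := by decide
lemma k4_5_4 : Kz' ![1,1,0] p2 ![0,1,1] ![0,2,0] ![1,0,2] = 9 := by decide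
lemma k4_5_5 : Kz' ![1,1,0] p2 ![0,1,1] ![0,2,0] ![1,1,1] = 15 := by decide
lemma k4_5_6 : Kz' ![1,1,0] p2 ![0,1,1] ![0,2,0] ![1,2,0] = 25 := by decide
lemma k4_5_7 : Kz' ![1,1,0] p2 ![0,1,1] ![0,2,0] ![2,0,1] = 3 := by decide
lemma k4_5_8 : Kz' ![1,1,0] p2 ![0,1,1] ![0,2,0] ![2,1,0] = 5 := by decide
lemma k4_5_9 : Kz' ![1,1,0] p2 ![0,1,1] ![0,2,0] ![3,0,0] = 1 := by decide
lemma k4_6_0 : Kz' ![1,1,0] p2 ![0,1,1] ![1,0,1] ![0,0,3] = -80 := by decide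
lemma k4_6_1 : Kz' ![1,1,0] p2 ![0,1,1] ![1,0,1] ![0,1,2] = -63 := by decide
lemma k4_6_2 : Kz' ![1,1,0] p2 ![0,1,1] ![1,0,1] ![0,2,1] = -9 := by decide
lemma k4_6_3 : Kz' ![1,1,0] p2 ![0,1,1] ![1,0,1] ![0,3,0] = 145 := by decide
lemma k4_6_4 : Kz' ![1,1,0] p2 ![0,1,1] ![1,0,1] ![1,0,2] = -147 := by decide
lemma k4_6_5 : Kz' ![1,1,0] p2 ![0,1,1] ![1,0,1] ![1,1,1] = -21 := by decide
lemma k4_6_6 : Kz' ![1,1,0] p2 ![0,1,1] ![1,0,1] ![1,2,0] = -3 := by decide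
lemma k4_6_7 : Kz' ![1,1,0] p2 ![0,1,1] ![1,0,1] ![2,0,1] = -49 := by decide
lemma k4_6_8 : Kz' ![1,1,0] p2 ![0,1,1] ![1,0,1] ![2,1,0] = -7 := by decide
lemma k4_6_9 : Kz' ![1,1,0] p2 ![0,1,1] ![1,0,1] ![3,0,0] = 325 := by decide
lemma k4_7_0 : Kz' ![1,1,0] p2 ![0,1,1] ![2,0,0] ![0,0,3] = -275 := by decide
lemma k4_7_1 : Kz' ![1,1,0] p2 ![0,1,1] ![2,0,0] ![0,1,2] = -117 := by decide
lemma k4_7_2 : Kz' ![1,1,0] p2 ![0,1,1] ![2,0,0] ![0,2,1] = -3 := by decide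
lemma k4_7_3 : Kz' ![1,1,0] p2 ![0,1,1] ![2,0,0] ![0,3,0] = 315 := by decide
lemma k4_7_4 : Kz' ![1,1,0] p2 ![0,1,1] ![2,0,0] ![1,0,2] = -497 := by decide
lemma k4_7_5 : Kz' ![1,1,0] p2 ![0,1,1] ![2,0,0] ![1,1,1] = -39 := by decide
lemma k4_7_6 : Kz' ![1,1,0] p2 ![0,1,1] ![2,0,0] ![1,2,0] = -1 := by decide
lemma k4_7_7 : Kz' ![1,1,0] p2 ![0,1,1] ![2,0,0] ![2,0,1] = -507 := by decide
lemma k4_7_8 : Kz' ![1,1,0] p2 ![0,1,1] ![2,0,0] ![2,1,0] = -13 := by decide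
lemma k4_7_9 : Kz' ![1,1,0] p2 ![0,1,1] ![2,0,0] ![3,0,0] = -169 := by decide
lemma k4_8_0 : Kz' ![1,1,0] p2 ![0,2,0] ![1,0,1] ![0,0,3] = -191 := by decide
lemma k4_8_1 : Kz' ![1,1,0] p2 ![0,2,0] ![1,0,1] ![0,1,2] = -201 := by decide
lemma k4_8_2 : Kz' ![1,1,0] p2 ![0,2,0] ![1,0,1] ![0,2,1] = -175 := by decide
lemma k4_8_3 : Kz' ![1,1,0] p2 ![0,2,0] ![1,0,1] ![0,3,0] = -25 := by decide
lemma k4_8_4 : Kz' ![1,1,0] p2 ![0,2,0] ![1,0,1] ![1,0,2] = -245 := by decide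
lemma k4_8_5 : Kz' ![1,1,0] p2 ![0,2,0] ![1,0,1] ![1,1,1] = -35 := by decide
lemma k4_8_6 : Kz' ![1,1,0] p2 ![0,2,0] ![1,0,1] ![1,2,0] = -5 := by decide
lemma k4_8_7 : Kz' ![1,1,0] p2 ![0,2,0] ![1,0,1] ![2,0,1] = -7 := by decide
lemma k4_8_8 : Kz' ![1,1,0] p2 ![0,2,0] ![1,0,1] ![2,1,0] = -1 := by decide
lemma k4_8_9 : Kz' ![1,1,0] p2 ![0,2,0] ![1,0,1] ![3,0,0] = 819 := by decide
lemma k4_9_0 : Kz' ![1,1,0] p2 ![0,2,0] ![2,0,0] ![0,0,3] = -576 := by decide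
lemma k4_9_1 : Kz' ![1,1,0] p2 ![0,2,0] ![2,0,0] ![0,1,2] = -384 := by decide
lemma k4_9_2 : Kz' ![1,1,0] p2 ![0,2,0] ![2,0,0] ![0,2,1] = -320 := by decide
lemma k4_9_3 : Kz' ![1,1,0] p2 ![0,2,0] ![2,0,0] ![0,3,0] = 0 := by decide
lemma k4_9_4 : Kz' ![1,1,0] p2 ![0,2,0] ![2,0,0] ![1,0,2] = -896 := by decide
lemma k4_9_5 : Kz' ![1,1,0] p2 ![0,2,0] ![2,0,0] ![1,1,1] = -64 := by decide
lemma k4_9_6 : Kz' ![1,1,0] p2 ![0,2,0] ![2,0,0] ![1,2,0] = 0 := by decide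
lemma k4_9_7 : Kz' ![1,1,0] p2 ![0,2,0] ![2,0,0] ![2,0,1] = -832 := by decide
lemma k4_9_8 : Kz' ![1,1,0] p2 ![0,2,0] ![2,0,0] ![2,1,0] = 0 := by decide
lemma k4_9_9 : Kz' ![1,1,0] p2 ![0,2,0] ![2,0,0] ![3,0,0] = 0 := by decide
lemma solve4 (lam : (DeltaFin 3 : Finset _) → ℂ)
    (key : ∀ (p : (Fin 3 → ℤ) → ℤ) (a b : ((DeltaFin 2).erase ![1,1,0] : Finset _)),
      ∑ c : DeltaFin 3, lam c * ((Kz ![1,1,0] p a.1 b.1 c.1 : ℤ) : ℂ) = 0) :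
    ∀ c : (DeltaFin 3 : Finset _), lam c = 0 := by
  have h0 := key p1 ⟨![0,0,2], by decide⟩ ⟨![0,1,1], by decide⟩
  rw [sum_D3_expand] at h0
  simp only [Kz_eq, k4_0_0, k4_0_1, k4_0_2, k4_0_3, k4_0_4, k4_0_5, k4_0_6, k4_0_7, k4_0_8, k4_0_9] at h0
  push_cast at h0
  have h1 := key p2 ⟨![0,0,2], by decide⟩ ⟨![0,1,1], by decide⟩
  rw [sum_D3_expand] at h1
  simp only [Kz_eq, k4_1_0, k4_1_1, k4_1_2, k4_1_3, k4_1_4, k4_1_5, k4_1_6, k4_1_7, k4_1_8, k4_1_9] at h1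
  push_cast at h1
  have h2 := key p2 ⟨![0,0,2], by decide⟩ ⟨![0,2,0], by decide⟩
  rw [sum_D3_expand] at h2
  simp only [Kz_eq, k4_2_0, k4_2_1, k4_2_2, k4_2_3, k4_2_4, k4_2_5, k4_2_6, k4_2_7, k4_2_8, k4_2_9] at h2
  push_cast at h2
  have h3 := key p2 ⟨![0,0,2], by decide⟩ ⟨![1,0,1], by decide⟩
  rw [sum_D3_expand] at h3
  simp only [Kz_eq, k4_3_0, k4_3_1, k4_3_2, k4_3_3, k4_3_4, k4_3_5, k4_3_6, k4_3_7, k4_3_8, k4_3_9] at h3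
  push_cast at h3
  have h4 := key p2 ⟨![0,0,2], by decide⟩ ⟨![2,0,0], by decide⟩
  rw [sum_D3_expand] at h4
  simp only [Kz_eq, k4_4_0, k4_4_1, k4_4_2, k4_4_3, k4_4_4, k4_4_5, k4_4_6, k4_4_7, k4_4_8, k4_4_9] at h4
  push_cast at h4
  have h5 := key p2 ⟨![0,1,1], by decide⟩ ⟨![0,2,0], by decide⟩
  rw [sum_D3_expand] at h5
  simp only [Kz_eq, k4_5_0, k4_5_1, k4_5_2, k4_5_3, k4_5_4, k4_5_5, k4_5_6, k4_5_7, k4_5_8, k4_5_9] at h5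
  push_cast at h5
  have h6 := key p2 ⟨![0,1,1], by decide⟩ ⟨![1,0,1], by decide⟩
  rw [sum_D3_expand] at h6
  simp only [Kz_eq, k4_6_0, k4_6_1, k4_6_2, k4_6_3, k4_6_4, k4_6_5, k4_6_6, k4_6_7, k4_6_8, k4_6_9] at h6
  push_cast at h6
  have h7 := key p2 ⟨![0,1,1], by decide⟩ ⟨![2,0,0], by decide⟩
  rw [sum_D3_expand] at h7
  simp only [Kz_eq, k4_7_0, k4_7_1, k4_7_2, k4_7_3, k4_7_4, k4_7_5, k4_7_6, k4_7_7, k4_7_8, k4_7_9] at h7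
  push_cast at h7
  have h8 := key p2 ⟨![0,2,0], by decide⟩ ⟨![1,0,1], by decide⟩
  rw [sum_D3_expand] at h8
  simp only [Kz_eq, k4_8_0, k4_8_1, k4_8_2, k4_8_3, k4_8_4, k4_8_5, k4_8_6, k4_8_7, k4_8_8, k4_8_9] at h8
  push_cast at h8
  have h9 := key p2 ⟨![0,2,0], by decide⟩ ⟨![2,0,0], by decide⟩
  rw [sum_D3_expand] at h9
  simp only [Kz_eq, k4_9_0, k4_9_1, k4_9_2, k4_9_3, k4_9_4, k4_9_5, k4_9_6, k4_9_7, k4_9_8, k4_9_9] at h9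
  push_cast at h9
  intro c
  obtain ⟨cv, hcv⟩ := c
  have hd : cv = ![0,0,3] ∨ cv = ![0,1,2] ∨ cv = ![0,2,1] ∨ cv = ![0,3,0] ∨ cv = ![1,0,2] ∨ cv = ![1,1,1] ∨ cv = ![1,2,0] ∨ cv = ![2,0,1] ∨ cv = ![2,1,0] ∨ cv = ![3,0,0] := by
    rw [show DeltaFin 3 = {![0,0,3], ![0,1,2], ![0,2,1], ![0,3,0], ![1,0,2], ![1,1,1], ![1,2,0], ![2,0,1], ![2,1,0], ![3,0,0]} from by decide] at hcv
    simpa [Finset.mem_insert] using hcv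
  rcases hd with rfl|rfl|rfl|rfl|rfl|rfl|rfl|rfl|rfl|rfl
  · linear_combination ((1 : ℂ)/9) * h6 + ((-1 : ℂ)/18) * h7 + ((-1 : ℂ)/18) * h8 + ((1 : ℂ)/36) * h9
  · linear_combination ((64 : ℂ)/9) * h0 + ((-1 : ℂ)/9) * h3 + ((1 : ℂ)/18) * h4 + ((-1 : ℂ)/4) * h5 + ((-1 : ℂ)/18) * h6 + ((67 : ℂ)/576) * h7 + ((41 : ℂ)/576) * h8 + ((-23 : ℂ)/288) * h9
  · linear_combination ((-76 : ℂ)/9) * h0 + ((1 : ℂ)/9) * h3 + ((-35 : ℂ)/576) * h4 + ((19 : ℂ)/64) * h5 + ((23 : ℂ)/576) * h6 + ((-137 : ℂ)/1152) * h7 + ((-91 : ℂ)/1152) * h8 + ((3211 : ℂ)/36864) * h9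
  · linear_combination ((361 : ℂ)/144) * h0 + ((-1 : ℂ)/36) * h3 + ((19 : ℂ)/1152) * h4 + ((-361 : ℂ)/4096) * h5 + ((-23 : ℂ)/1152) * h6 + ((95 : ℂ)/2304) * h7 + ((361 : ℂ)/12288) * h8 + ((-361 : ℂ)/12288) * h9
  · linear_combination ((1 : ℂ)/9) * h1 + ((-1 : ℂ)/18) * h2 + ((1 : ℂ)/36) * h5 + ((-1 : ℂ)/18) * h6 + ((17 : ℂ)/576) * h7 + ((19 : ℂ)/576) * h8 + ((-5 : ℂ)/288) * h9
  · linear_combination ((-4 : ℂ)/9) * h0 + ((-1 : ℂ)/9) * h1 + ((-7 : ℂ)/576) * h2 + ((1 : ℂ)/9) * h3 + ((-17 : ℂ)/576) * h4 + ((1 : ℂ)/18) * h5 + ((-19 : ℂ)/288) * h6 + ((-1 : ℂ)/192) * h7 + ((-1 : ℂ)/192) * h8 + ((265 : ℂ)/18432) * h9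
  · linear_combination ((19 : ℂ)/72) * h0 + ((1 : ℂ)/36) * h1 + ((23 : ℂ)/1152) * h2 + ((-1 : ℂ)/18) * h3 + ((5 : ℂ)/288) * h4 + ((187 : ℂ)/36864) * h5 + ((5 : ℂ)/384) * h6 + ((-7 : ℂ)/1152) * h7 + ((551 : ℂ)/36864) * h8 + ((-19 : ℂ)/6144) * h9
  · linear_combination ((-1 : ℂ)/9) * h1 + ((35 : ℂ)/576) * h2 + ((-19 : ℂ)/576) * h5 + ((-1 : ℂ)/576) * h6 + ((-1 : ℂ)/1152) * h7 + ((1 : ℂ)/1152) * h8 + ((19 : ℂ)/36864) * h9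
  · linear_combination ((1 : ℂ)/144) * h0 + ((1 : ℂ)/18) * h1 + ((1 : ℂ)/288) * h2 + ((-1 : ℂ)/36) * h3 + ((1 : ℂ)/1152) * h4 + ((-883 : ℂ)/36864) * h5 + ((13 : ℂ)/384) * h6 + ((-1 : ℂ)/2304) * h7 + ((-335 : ℂ)/36864) * h8 + ((-1 : ℂ)/12288) * h9
  · linear_combination ((1 : ℂ)/36) * h1 + ((-19 : ℂ)/1152) * h2 + ((361 : ℂ)/36864) * h5 + ((1 : ℂ)/1152) * h6 + ((-19 : ℂ)/36864) * h8

lemma k5_0_0 : Kz' ![2,0,0] p1 ![0,0,2] ![0,1,1] ![0,0,3] = 2 := by decide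
lemma k5_0_1 : Kz' ![2,0,0] p1 ![0,0,2] ![0,1,1] ![0,1,2] = 2 := by decide
lemma k5_0_2 : Kz' ![2,0,0] p1 ![0,0,2] ![0,1,1] ![0,2,1] = 2 := by decide
lemma k5_0_3 : Kz' ![2,0,0] p1 ![0,0,2] ![0,1,1] ![0,3,0] = 2 := by decide
lemma k5_0_4 : Kz' ![2,0,0] p1 ![0,0,2] ![0,1,1] ![1,0,2] = 2 := by decide
lemma k5_0_5 : Kz' ![2,0,0] p1 ![0,0,2] ![0,1,1] ![1,1,1] = 2 := by decide
lemma k5_0_6 : Kz' ![2,0,0] p1 ![0,0,2] ![0,1,1] ![1,2,0] = 2 := by decide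
lemma k5_0_7 : Kz' ![2,0,0] p1 ![0,0,2] ![0,1,1] ![2,0,1] = 2 := by decide
lemma k5_0_8 : Kz' ![2,0,0] p1 ![0,0,2] ![0,1,1] ![2,1,0] = 2 := by decide
lemma k5_0_9 : Kz' ![2,0,0] p1 ![0,0,2] ![0,1,1] ![3,0,0] = 2 := by decide
lemma k5_1_0 : Kz' ![2,0,0] p2 ![0,0,2] ![0,1,1] ![0,0,3] = 56 := by decide
lemma k5_1_1 : Kz' ![2,0,0] p2 ![0,0,2] ![0,1,1] ![0,1,2] = 84 := by decide
lemma k5_1_2 : Kz' ![2,0,0] p2 ![0,0,2] ![0,1,1] ![0,2,1] = 126 := by decide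
lemma k5_1_3 : Kz' ![2,0,0] p2 ![0,0,2] ![0,1,1] ![0,3,0] = 188 := by decide
lemma k5_1_4 : Kz' ![2,0,0] p2 ![0,0,2] ![0,1,1] ![1,0,2] = 102 := by decide
lemma k5_1_5 : Kz' ![2,0,0] p2 ![0,0,2] ![0,1,1] ![1,1,1] = 153 := by decide
lemma k5_1_6 : Kz' ![2,0,0] p2 ![0,0,2] ![0,1,1] ![1,2,0] = 229 := by decide
lemma k5_1_7 : Kz' ![2,0,0] p2 ![0,0,2] ![0,1,1] ![2,0,1] = 28 := by decide
lemma k5_1_8 : Kz' ![2,0,0] p2 ![0,0,2] ![0,1,1] ![2,1,0] = 42 := by decide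
lemma k5_1_9 : Kz' ![2,0,0] p2 ![0,0,2] ![0,1,1] ![3,0,0] = 51 := by decide
lemma k5_2_0 : Kz' ![2,0,0] p2 ![0,0,2] ![0,2,0] ![0,0,3] = 172 := by decide
lemma k5_2_1 : Kz' ![2,0,0] p2 ![0,0,2] ![0,2,0] ![0,1,2] = 272 := by decide
lemma k5_2_2 : Kz' ![2,0,0] p2 ![0,0,2] ![0,2,0] ![0,2,1] = 430 := by decide
lemma k5_2_3 : Kz' ![2,0,0] p2 ![0,0,2] ![0,2,0] ![0,3,0] = 680 := by decide
lemma k5_2_4 : Kz' ![2,0,0] p2 ![0,0,2] ![0,2,0] ![1,0,2] = 320 := by decide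
lemma k5_2_5 : Kz' ![2,0,0] p2 ![0,0,2] ![0,2,0] ![1,1,1] = 506 := by decide
lemma k5_2_6 : Kz' ![2,0,0] p2 ![0,0,2] ![0,2,0] ![1,2,0] = 800 := by decide
lemma k5_2_7 : Kz' ![2,0,0] p2 ![0,0,2] ![0,2,0] ![2,0,1] = 86 := by decide
lemma k5_2_8 : Kz' ![2,0,0] p2 ![0,0,2] ![0,2,0] ![2,1,0] = 136 := by decide
lemma k5_2_9 : Kz' ![2,0,0] p2 ![0,0,2] ![0,2,0] ![3,0,0] = 160 := by decide
lemma k5_3_0 : Kz' ![2,0,0] p2 ![0,0,2] ![1,0,1] ![0,0,3] = 0 := by decide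
lemma k5_3_1 : Kz' ![2,0,0] p2 ![0,0,2] ![1,0,1] ![0,1,2] = 94 := by decide
lemma k5_3_2 : Kz' ![2,0,0] p2 ![0,0,2] ![1,0,1] ![0,2,1] = 282 := by decide
lemma k5_3_3 : Kz' ![2,0,0] p2 ![0,0,2] ![1,0,1] ![0,3,0] = 681 := by decide
lemma k5_3_4 : Kz' ![2,0,0] p2 ![0,0,2] ![1,0,1] ![1,0,2] = 0 := by decide
lemma k5_3_5 : Kz' ![2,0,0] p2 ![0,0,2] ![1,0,1] ![1,1,1] = 329 := by decide
lemma k5_3_6 : Kz' ![2,0,0] p2 ![0,0,2] ![1,0,1] ![1,2,0] = 1034 := by decide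
lemma k5_3_7 : Kz' ![2,0,0] p2 ![0,0,2] ![1,0,1] ![2,0,1] = 0 := by decide
lemma k5_3_8 : Kz' ![2,0,0] p2 ![0,0,2] ![1,0,1] ![2,1,0] = 47 := by decide
lemma k5_3_9 : Kz' ![2,0,0] p2 ![0,0,2] ![1,0,1] ![3,0,0] = 0 := by decide
lemma k5_4_0 : Kz' ![2,0,0] p2 ![0,0,2] ![1,1,0] ![0,0,3] = 102 := by decide
lemma k5_4_1 : Kz' ![2,0,0] p2 ![0,0,2] ![1,1,0] ![0,1,2] = 308 := by decide
lemma k5_4_2 : Kz' ![2,0,0] p2 ![0,0,2] ![1,1,0] ![0,2,1] = 695 := by decide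
lemma k5_4_3 : Kz' ![2,0,0] p2 ![0,0,2] ![1,1,0] ![0,3,0] = 1466 := by decide
lemma k5_4_4 : Kz' ![2,0,0] p2 ![0,0,2] ![1,1,0] ![1,0,2] = 28 := by decide
lemma k5_4_5 : Kz' ![2,0,0] p2 ![0,0,2] ![1,1,0] ![1,1,1] = 561 := by decide
lemma k5_4_6 : Kz' ![2,0,0] p2 ![0,0,2] ![1,1,0] ![1,2,0] = 1694 := by decide
lemma k5_4_7 : Kz' ![2,0,0] p2 ![0,0,2] ![1,1,0] ![2,0,1] = 51 := by decide
lemma k5_4_8 : Kz' ![2,0,0] p2 ![0,0,2] ![1,1,0] ![2,1,0] = 154 := by decide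
lemma k5_4_9 : Kz' ![2,0,0] p2 ![0,0,2] ![1,1,0] ![3,0,0] = 14 := by decide
lemma k5_5_0 : Kz' ![2,0,0] p2 ![0,1,1] ![0,2,0] ![0,0,3] = 118 := by decide
lemma k5_5_1 : Kz' ![2,0,0] p2 ![0,1,1] ![0,2,0] ![0,1,2] = 198 := by decide
lemma k5_5_2 : Kz' ![2,0,0] p2 ![0,1,1] ![0,2,0] ![0,2,1] = 330 := by decide
lemma k5_5_3 : Kz' ![2,0,0] p2 ![0,1,1] ![0,2,0] ![0,3,0] = 550 := by decide
lemma k5_5_4 : Kz' ![2,0,0] p2 ![0,1,1] ![0,2,0] ![1,0,2] = 226 := by decide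
lemma k5_5_5 : Kz' ![2,0,0] p2 ![0,1,1] ![0,2,0] ![1,1,1] = 378 := by decide
lemma k5_5_6 : Kz' ![2,0,0] p2 ![0,1,1] ![0,2,0] ![1,2,0] = 630 := by decide
lemma k5_5_7 : Kz' ![2,0,0] p2 ![0,1,1] ![0,2,0] ![2,0,1] = 66 := by decide
lemma k5_5_8 : Kz' ![2,0,0] p2 ![0,1,1] ![0,2,0] ![2,1,0] = 110 := by decide
lemma k5_5_9 : Kz' ![2,0,0] p2 ![0,1,1] ![0,2,0] ![3,0,0] = 126 := by decide
lemma k5_6_0 : Kz' ![2,0,0] p2 ![0,1,1] ![1,0,1] ![0,0,3] = -192 := by decide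
lemma k5_6_1 : Kz' ![2,0,0] p2 ![0,1,1] ![1,0,1] ![0,1,2] = -147 := by decide
lemma k5_6_2 : Kz' ![2,0,0] p2 ![0,1,1] ![1,0,1] ![0,2,1] = -9 := by decide
lemma k5_6_3 : Kz' ![2,0,0] p2 ![0,1,1] ![1,0,1] ![0,3,0] = 377 := by decide
lemma k5_6_4 : Kz' ![2,0,0] p2 ![0,1,1] ![1,0,1] ![1,0,2] = -343 := by decide
lemma k5_6_5 : Kz' ![2,0,0] p2 ![0,1,1] ![1,0,1] ![1,1,1] = -21 := by decide
lemma k5_6_6 : Kz' ![2,0,0] p2 ![0,1,1] ![1,0,1] ![1,2,0] = 781 := by decide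
lemma k5_6_7 : Kz' ![2,0,0] p2 ![0,1,1] ![1,0,1] ![2,0,1] = -49 := by decide
lemma k5_6_8 : Kz' ![2,0,0] p2 ![0,1,1] ![1,0,1] ![2,1,0] = -3 := by decide
lemma k5_6_9 : Kz' ![2,0,0] p2 ![0,1,1] ![1,0,1] ![3,0,0] = -7 := by decide
lemma k5_7_0 : Kz' ![2,0,0] p2 ![0,1,1] ![1,1,0] ![0,0,3] = -149 := by decide
lemma k5_7_1 : Kz' ![2,0,0] p2 ![0,1,1] ![1,1,0] ![0,1,2] = 9 := by decide
lemma k5_7_2 : Kz' ![2,0,0] p2 ![0,1,1] ![1,1,0] ![0,2,1] = 363 := by decide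
lemma k5_7_3 : Kz' ![2,0,0] p2 ![0,1,1] ![1,1,0] ![0,3,0] = 1185 := by decide
lemma k5_7_4 : Kz' ![2,0,0] p2 ![0,1,1] ![1,1,0] ![1,0,2] = -497 := by decide
lemma k5_7_5 : Kz' ![2,0,0] p2 ![0,1,1] ![1,1,0] ![1,1,1] = 33 := by decide
lemma k5_7_6 : Kz' ![2,0,0] p2 ![0,1,1] ![1,1,0] ![1,2,0] = 1331 := by decide
lemma k5_7_7 : Kz' ![2,0,0] p2 ![0,1,1] ![1,1,0] ![2,0,1] = 3 := by decide
lemma k5_7_8 : Kz' ![2,0,0] p2 ![0,1,1] ![1,1,0] ![2,1,0] = 121 := by decide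
lemma k5_7_9 : Kz' ![2,0,0] p2 ![0,1,1] ![1,1,0] ![3,0,0] = 11 := by decide
lemma k5_8_0 : Kz' ![2,0,0] p2 ![0,2,0] ![1,0,1] ![0,0,3] = -590 := by decide
lemma k5_8_1 : Kz' ![2,0,0] p2 ![0,2,0] ![1,0,1] ![0,1,2] = -698 := by decide
lemma k5_8_2 : Kz' ![2,0,0] p2 ![0,2,0] ![1,0,1] ![0,2,1] = -770 := by decide
lemma k5_8_3 : Kz' ![2,0,0] p2 ![0,2,0] ![1,0,1] ![0,3,0] = -630 := by decide
lemma k5_8_4 : Kz' ![2,0,0] p2 ![0,2,0] ![1,0,1] ![1,0,2] = -1078 := by decide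
lemma k5_8_5 : Kz' ![2,0,0] p2 ![0,2,0] ![1,0,1] ![1,1,1] = -882 := by decide
lemma k5_8_6 : Kz' ![2,0,0] p2 ![0,2,0] ![1,0,1] ![1,2,0] = -110 := by decide
lemma k5_8_7 : Kz' ![2,0,0] p2 ![0,2,0] ![1,0,1] ![2,0,1] = -154 := by decide
lemma k5_8_8 : Kz' ![2,0,0] p2 ![0,2,0] ![1,0,1] ![2,1,0] = -126 := by decide
lemma k5_8_9 : Kz' ![2,0,0] p2 ![0,2,0] ![1,0,1] ![3,0,0] = -22 := by decide
lemma k5_9_0 : Kz' ![2,0,0] p2 ![0,2,0] ![1,1,0] ![0,0,3] = -672 := by decide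
lemma k5_9_1 : Kz' ![2,0,0] p2 ![0,2,0] ![1,1,0] ![0,1,2] = -696 := by decide
lemma k5_9_2 : Kz' ![2,0,0] p2 ![0,2,0] ![1,1,0] ![0,2,1] = -580 := by decide
lemma k5_9_3 : Kz' ![2,0,0] p2 ![0,2,0] ![1,1,0] ![0,3,0] = 0 := by decide
lemma k5_9_4 : Kz' ![2,0,0] p2 ![0,2,0] ![1,1,0] ![1,0,2] = -1624 := by decide
lemma k5_9_5 : Kz' ![2,0,0] p2 ![0,2,0] ![1,1,0] ![1,1,1] = -1276 := by decide
lemma k5_9_6 : Kz' ![2,0,0] p2 ![0,2,0] ![1,1,0] ![1,2,0] = 0 := by decide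
lemma k5_9_7 : Kz' ![2,0,0] p2 ![0,2,0] ![1,1,0] ![2,0,1] = -116 := by decide
lemma k5_9_8 : Kz' ![2,0,0] p2 ![0,2,0] ![1,1,0] ![2,1,0] = 0 := by decide
lemma k5_9_9 : Kz' ![2,0,0] p2 ![0,2,0] ![1,1,0] ![3,0,0] = 0 := by decide
lemma solve5 (lam : (DeltaFin 3 : Finset _) → ℂ)
    (key : ∀ (p : (Fin 3 → ℤ) → ℤ) (a b : ((DeltaFin 2).erase ![2,0,0] : Finset _)),
      ∑ c : DeltaFin 3, lam c * ((Kz ![2,0,0] p a.1 b.1 c.1 : ℤ) : ℂ) = 0) :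
    ∀ c : (DeltaFin 3 : Finset _), lam c = 0 := by
  have h0 := key p1 ⟨![0,0,2], by decide⟩ ⟨![0,1,1], by decide⟩
  rw [sum_D3_expand] at h0
  simp only [Kz_eq, k5_0_0, k5_0_1, k5_0_2, k5_0_3, k5_0_4, k5_0_5, k5_0_6, k5_0_7, k5_0_8, k5_0_9] at h0
  push_cast at h0
  have h1 := key p2 ⟨![0,0,2], by decide⟩ ⟨![0,1,1], by decide⟩
  rw [sum_D3_expand] at h1
  simp only [Kz_eq, k5_1_0, k5_1_1, k5_1_2, k5_1_3, k5_1_4, k5_1_5, k5_1_6, k5_1_7, k5_1_8, k5_1_9] at h1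
  push_cast at h1
  have h2 := key p2 ⟨![0,0,2], by decide⟩ ⟨![0,2,0], by decide⟩
  rw [sum_D3_expand] at h2
  simp only [Kz_eq, k5_2_0, k5_2_1, k5_2_2, k5_2_3, k5_2_4, k5_2_5, k5_2_6, k5_2_7, k5_2_8, k5_2_9] at h2
  push_cast at h2
  have h3 := key p2 ⟨![0,0,2], by decide⟩ ⟨![1,0,1], by decide⟩
  rw [sum_D3_expand] at h3
  simp only [Kz_eq, k5_3_0, k5_3_1, k5_3_2, k5_3_3, k5_3_4, k5_3_5, k5_3_6, k5_3_7, k5_3_8, k5_3_9] at h3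
  push_cast at h3
  have h4 := key p2 ⟨![0,0,2], by decide⟩ ⟨![1,1,0], by decide⟩
  rw [sum_D3_expand] at h4
  simp only [Kz_eq, k5_4_0, k5_4_1, k5_4_2, k5_4_3, k5_4_4, k5_4_5, k5_4_6, k5_4_7, k5_4_8, k5_4_9] at h4
  push_cast at h4
  have h5 := key p2 ⟨![0,1,1], by decide⟩ ⟨![0,2,0], by decide⟩
  rw [sum_D3_expand] at h5
  simp only [Kz_eq, k5_5_0, k5_5_1, k5_5_2, k5_5_3, k5_5_4, k5_5_5, k5_5_6, k5_5_7, k5_5_8, k5_5_9] at h5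
  push_cast at h5
  have h6 := key p2 ⟨![0,1,1], by decide⟩ ⟨![1,0,1], by decide⟩
  rw [sum_D3_expand] at h6
  simp only [Kz_eq, k5_6_0, k5_6_1, k5_6_2, k5_6_3, k5_6_4, k5_6_5, k5_6_6, k5_6_7, k5_6_8, k5_6_9] at h6
  push_cast at h6
  have h7 := key p2 ⟨![0,1,1], by decide⟩ ⟨![1,1,0], by decide⟩
  rw [sum_D3_expand] at h7
  simp only [Kz_eq, k5_7_0, k5_7_1, k5_7_2, k5_7_3, k5_7_4, k5_7_5, k5_7_6, k5_7_7, k5_7_8, k5_7_9] at h7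
  push_cast at h7
  have h8 := key p2 ⟨![0,2,0], by decide⟩ ⟨![1,0,1], by decide⟩
  rw [sum_D3_expand] at h8
  simp only [Kz_eq, k5_8_0, k5_8_1, k5_8_2, k5_8_3, k5_8_4, k5_8_5, k5_8_6, k5_8_7, k5_8_8, k5_8_9] at h8
  push_cast at h8
  have h9 := key p2 ⟨![0,2,0], by decide⟩ ⟨![1,1,0], by decide⟩
  rw [sum_D3_expand] at h9
  simp only [Kz_eq, k5_9_0, k5_9_1, k5_9_2, k5_9_3, k5_9_4, k5_9_5, k5_9_6, k5_9_7, k5_9_8, k5_9_9] at h9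
  push_cast at h9
  intro c
  obtain ⟨cv, hcv⟩ := c
  have hd : cv = ![0,0,3] ∨ cv = ![0,1,2] ∨ cv = ![0,2,1] ∨ cv = ![0,3,0] ∨ cv = ![1,0,2] ∨ cv = ![1,1,1] ∨ cv = ![1,2,0] ∨ cv = ![2,0,1] ∨ cv = ![2,1,0] ∨ cv = ![3,0,0] := by
    rw [show DeltaFin 3 = {![0,0,3], ![0,1,2], ![0,2,1], ![0,3,0], ![1,0,2], ![1,1,1], ![1,2,0], ![2,0,1], ![2,1,0], ![3,0,0]} from by decide] at hcv
    simpa [Finset.mem_insert] using hcv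
  rcases hd with rfl|rfl|rfl|rfl|rfl|rfl|rfl|rfl|rfl|rfl
  · linear_combination ((29 : ℂ)/8) * h0 + ((-3509 : ℂ)/144) * h1 + ((4147 : ℂ)/288) * h2 + ((3509 : ℂ)/144) * h3 + ((-2233 : ℂ)/144) * h4 + ((-4901 : ℂ)/576) * h5 + ((-2059 : ℂ)/144) * h6 + ((1247 : ℂ)/144) * h7 + ((-667 : ℂ)/576) * h8 + ((575 : ℂ)/576) * h9
  · linear_combination ((-45 : ℂ)/16) * h0 + ((605 : ℂ)/32) * h1 + ((-715 : ℂ)/64) * h2 + ((-12173 : ℂ)/288) * h3 + ((7757 : ℂ)/288) * h4 + ((845 : ℂ)/128) * h5 + ((4123 : ℂ)/288) * h6 + ((-2539 : ℂ)/288) * h7 + ((9571 : ℂ)/1152) * h8 + ((-6307 : ℂ)/1152) * h9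
  · linear_combination ((-27 : ℂ)/32) * h0 + ((363 : ℂ)/64) * h1 + ((-429 : ℂ)/128) * h2 + ((13901 : ℂ)/576) * h3 + ((-8849 : ℂ)/576) * h4 + ((507 : ℂ)/256) * h5 + ((-403 : ℂ)/576) * h6 + ((319 : ℂ)/576) * h7 + ((-21283 : ℂ)/2304) * h8 + ((13399 : ℂ)/2304) * h9
  · linear_combination ((47 : ℂ)/64) * h0 + ((-5687 : ℂ)/1152) * h1 + ((6721 : ℂ)/2304) * h2 + ((-585 : ℂ)/128) * h3 + ((3337 : ℂ)/1152) * h4 + ((-7943 : ℂ)/4608) * h5 + ((-611 : ℂ)/384) * h6 + ((1081 : ℂ)/1152) * h7 + ((4277 : ℂ)/1536) * h8 + ((-7943 : ℂ)/4608) * h9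
  · linear_combination ((-29 : ℂ)/16) * h0 + ((10237 : ℂ)/288) * h1 + ((-12731 : ℂ)/576) * h2 + ((-3509 : ℂ)/288) * h3 + ((261 : ℂ)/32) * h4 + ((15853 : ℂ)/1152) * h5 + ((5539 : ℂ)/288) * h6 + ((-387 : ℂ)/32) * h7 + ((-7685 : ℂ)/1152) * h8 + ((1535 : ℂ)/384) * h9
  · linear_combination ((37 : ℂ)/16) * h0 + ((-13061 : ℂ)/288) * h1 + ((16219 : ℂ)/576) * h2 + ((1415 : ℂ)/96) * h3 + ((-2849 : ℂ)/288) * h4 + ((-20165 : ℂ)/1152) * h5 + ((-2345 : ℂ)/96) * h6 + ((4423 : ℂ)/288) * h7 + ((3367 : ℂ)/384) * h8 + ((-6065 : ℂ)/1152) * h9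
  · linear_combination ((-47 : ℂ)/64) * h0 + ((16639 : ℂ)/1152) * h1 + ((-20633 : ℂ)/2304) * h2 + ((-5095 : ℂ)/1152) * h3 + ((3431 : ℂ)/1152) * h4 + ((25615 : ℂ)/4608) * h5 + ((8897 : ℂ)/1152) * h6 + ((-5593 : ℂ)/1152) * h7 + ((-13207 : ℂ)/4608) * h8 + ((7943 : ℂ)/4608) * h9
  · linear_combination ((1 : ℂ)/32) * h0 + ((343 : ℂ)/576) * h1 + ((79 : ℂ)/1152) * h2 + ((121 : ℂ)/576) * h3 + ((-21 : ℂ)/64) * h4 + ((-761 : ℂ)/2304) * h5 + ((-71 : ℂ)/576) * h6 + ((65 : ℂ)/192) * h7 + ((-23 : ℂ)/2304) * h8 + ((-55 : ℂ)/768) * h9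
  · linear_combination ((1 : ℂ)/64) * h0 + ((-713 : ℂ)/1152) * h1 + ((223 : ℂ)/2304) * h2 + ((113 : ℂ)/1152) * h3 + ((71 : ℂ)/1152) * h4 + ((583 : ℂ)/4608) * h5 + ((-343 : ℂ)/1152) * h6 + ((23 : ℂ)/1152) * h7 + ((641 : ℂ)/4608) * h8 + ((-169 : ℂ)/4608) * h9
  · linear_combination ((-1 : ℂ)/64) * h0 + ((43 : ℂ)/384) * h1 + ((-15 : ℂ)/256) * h2 + ((-121 : ℂ)/1152) * h3 + ((73 : ℂ)/1152) * h4 + ((59 : ℂ)/1536) * h5 + ((191 : ℂ)/1152) * h6 + ((-119 : ℂ)/1152) * h7 + ((-265 : ℂ)/4608) * h8 + ((169 : ℂ)/4608) * h9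

/-- for every `a⁰ ∈ Δ(2)`, the ten brackets `B_{x^c}`,
`c ∈ Δ(3)`, are linearly independent: if `Σ_c λ_c·B_{x^c}(f,g) = 0` for all
`f, g ∈ R`, then all `λ_c = 0`. -/

theorem BF_linearly_independent :
    ∀ a0 ∈ DeltaFin 2, ∀ lam : DeltaFin 3 → ℂ,
      (∀ f g : ChartRing a0,
        ∑ c : DeltaFin 3, lam c • BF a0 (Fmono c.1) f g = 0) →
      ∀ c : DeltaFin 3, lam c = 0 := by
  intro a0 ha0 lam H c0
  have key := key_lemma a0 ha0 lam H
  have hd : a0 = ![0,0,2] ∨ a0 = ![0,1,1] ∨ a0 = ![0,2,0] ∨ a0 = ![1,0,1] ∨ a0 = ![1,1,0] ∨ a0 = ![2,0,0] := by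
    rw [show DeltaFin 2 = {![0,0,2], ![0,1,1], ![0,2,0], ![1,0,1], ![1,1,0], ![2,0,0]} from by decide] at ha0
    simpa [Finset.mem_insert] using ha0
  rcases hd with rfl|rfl|rfl|rfl|rfl|rfl
  · exact solve0 lam key c0
  · exact solve1 lam key c0
  · exact solve2 lam key c0
  · exact solve3 lam key c0
  · exact solve4 lam key c0
  · exact solve5 lam key c0
end

section
/- It is not true that for every F ∈ ℂ^{Δ(3)} the bracket {·,·}_F on the polynomial ring P = ℂ[u_a : a ∈ Δ(2)] in 6 variables satisfies the Jacobi identity: there exist F ∈ ℂ^{Δ(3)} and f, g, h ∈ P such that {f,{g,h}_F}_F + {g,{h,f}_F}_F + {h,{f,g}_F}_F ≠ 0. (The explicit formulas define Poisson brackets only on the projective space P⁵, not on the algebra of polynomials in 6 variables.) -/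
/-- The skew-symmetric biderivation `{f,g}_F` on `P = ℂ[u_a : a ∈ Δ(2)]`. -/
noncomputable def pBracket (F : DeltaFin 3 → ℂ)
    (f g : MvPolynomial (DeltaFin 2) ℂ) : MvPolynomial (DeltaFin 2) ℂ :=
  ∑ a : DeltaFin 2, ∑ b : DeltaFin 2,
    bF F a.1 b.1 * MvPolynomial.pderiv a f * MvPolynomial.pderiv b g


namespace JacobiCounterexample

open MvPolynomial

noncomputable def E : MvPolynomial (DeltaFin 2) ℂ →+* ℂ :=
  MvPolynomial.eval (fun _ => (1 : ℂ))

def oneF : DeltaFin 3 → ℂ := fun _ => 1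

/-- integer value of `E (bF oneF a b)` -/
noncomputable def Sz (a b : Fin 3 → ℤ) : ℤ :=
  ∑ c : DeltaFin 3, ∑ a' : DeltaFin 2, ∑ b' : DeltaFin 2, sgnSum a b c.1 a'.1 b'.1

/-- integer value of `E (pderiv v (bF oneF j k))` -/
noncomputable def Dz (v : DeltaFin 2) (j k : Fin 3 → ℤ) : ℤ :=
  ∑ c : DeltaFin 3, ∑ a' : DeltaFin 2, ∑ b' : DeltaFin 2,
    sgnSum j k c.1 a'.1 b'.1 *
      ((if a' = v then 1 else 0) + (if b' = v then 1 else 0))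

lemma pb_XX (F : DeltaFin 3 → ℂ) (I J : DeltaFin 2) :
    pBracket F (X I) (X J) = bF F I.1 J.1 := by
  simp [pBracket, Pi.single_apply, mul_ite, ite_mul, Finset.sum_ite_eq,
    Finset.sum_ite_eq']

lemma eval_bF (a b : Fin 3 → ℤ) :
    E (bF oneF a b) = ((Sz a b : ℤ) : ℂ) := by
  simp only [bF, brkt, oneF, one_smul, map_sum, E, smul_eq_C_mul, map_mul,
    eval_C, eval_X, mul_one, Sz]
  push_cast
  rfl

lemma eval_pderiv_bF (v : DeltaFin 2) (j k : Fin 3 → ℤ) :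
    E (MvPolynomial.pderiv v (bF oneF j k)) = ((Dz v j k : ℤ) : ℂ) := by
  simp only [bF, brkt, oneF, one_smul, map_sum, smul_eq_C_mul, pderiv_mul,
    pderiv_C, pderiv_X, zero_mul, zero_add, Pi.single_apply, E, map_add,
    map_mul, eval_C, eval_X, apply_ite (MvPolynomial.eval fun _ => (1:ℂ)),
    map_one, map_zero, mul_one, one_mul, Dz]
  push_cast
  exact Finset.sum_congr rfl fun _ _ => Finset.sum_congr rfl fun _ _ =>
    Finset.sum_congr rfl fun _ _ => by ring

lemma eval_term (I : DeltaFin 2) (j k : Fin 3 → ℤ) :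
    E (pBracket oneF (X I) (bF oneF j k)) =
      ((∑ b : DeltaFin 2, Sz I.1 b.1 * Dz b j k : ℤ) : ℂ) := by
  rw [pBracket, Finset.sum_comm]
  simp only [Pi.single_apply, pderiv_X, mul_ite, ite_mul, zero_mul, mul_zero,
    mul_one, one_mul, Finset.sum_ite_eq, Finset.sum_ite_eq', Finset.mem_univ,
    if_true]
  simp only [map_sum, map_mul, eval_bF, eval_pderiv_bF]
  push_cast
  rfl

end JacobiCounterexample

set_option maxHeartbeats 4000000 in
/-- the brackets `{·,·}_F` on the polynomial ring in 6 variables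
do NOT in general satisfy the Jacobi identity. -/
theorem exists_jacobi_failure_on_polynomial_ring :
    ∃ (F : DeltaFin 3 → ℂ) (f g h : MvPolynomial (DeltaFin 2) ℂ),
      pBracket F f (pBracket F g h) + pBracket F g (pBracket F h f) +
        pBracket F h (pBracket F f g) ≠ 0 := by
  open JacobiCounterexample MvPolynomial in
  refine ⟨oneF, X ⟨![0,0,2], by decide⟩, X ⟨![0,1,1], by decide⟩,
    X ⟨![0,2,0], by decide⟩, fun hc => ?_⟩
  have key : E (pBracket oneF (X (⟨![0,0,2], by decide⟩ : DeltaFin 2))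
        (pBracket oneF (X (⟨![0,1,1], by decide⟩ : DeltaFin 2))
          (X (⟨![0,2,0], by decide⟩ : DeltaFin 2))) +
      pBracket oneF (X (⟨![0,1,1], by decide⟩ : DeltaFin 2))
        (pBracket oneF (X (⟨![0,2,0], by decide⟩ : DeltaFin 2))
          (X (⟨![0,0,2], by decide⟩ : DeltaFin 2))) +
      pBracket oneF (X (⟨![0,2,0], by decide⟩ : DeltaFin 2))
        (pBracket oneF (X (⟨![0,0,2], by decide⟩ : DeltaFin 2))
          (X (⟨![0,1,1], by decide⟩ : DeltaFin 2)))) = (30 : ℂ) := by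
    rw [pb_XX, pb_XX, pb_XX, map_add, map_add, eval_term, eval_term, eval_term]
    norm_cast
  rw [hc] at key
  simp at key
end
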